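/- arXiv:1704.00699 — 8 statements merged into one kernel-verified Lean document; each statement's English description precedes it below -/
import Mathlib

section
/- Let X and Y be standard Borel spaces, μ a Borel probability measure on X, ν a Borel measure on Y, and R ⊆ X × Y a Borel, locally finite, (μ,ν)-preserving set satisfying ν(R_A) ≥ c·μ(A) for all Borel A ⊆ X, where c > 1. Let n ∈ ℕ and let g be a Borel partial injection from X to Y compatible with R which admits no g-augmenting paths of length less than n. Then μ(X ∖ dom(g)) ≤ c^{-n}. -/
open MeasureTheory Set
open scoped ENNReal
open Filter Topology

-- Auxiliary lemmas

/-- `R ⊆ X × Y` is `(μ,ν)`-preserving: every Borel bijection `f : A → B` between Borel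
subsets whose graph is contained in `R` satisfies `μ(A) = ν(B)`. -/
def MeasurePreservingRel {X Y : Type*} [MeasurableSpace X] [MeasurableSpace Y]
    (R : Set (X × Y)) (μ : Measure X) (ν : Measure Y) : Prop :=
  ∀ (A : Set X) (f : X → Y), MeasurableSet A → Measurable f → Set.InjOn f A →
    (∀ x ∈ A, (x, f x) ∈ R) → μ A = ν (f '' A)

/-- A `g`-augmenting path of length `n` for a partial injection `g` with domain `D`,
relative to `R ⊆ X × Y`: a sequence `(x_0, y_0, …, x_n, y_n)` such that `x_0 ∉ dom(g)`,
the `y_i` are pairwise distinct, `(x_i, y_i) ∈ R` for all `i`, `y_i = g(x_{i+1})` for all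
`i < n`, and `y_n` is not in the image of `g`. -/
def IsAugPath {X Y : Type*} (R : Set (X × Y)) (D : Set X) (g : X → Y) (n : ℕ)
    (x : Fin (n + 1) → X) (y : Fin (n + 1) → Y) : Prop :=
  x 0 ∉ D ∧ Function.Injective y ∧ (∀ i, (x i, y i) ∈ R) ∧
    (∀ i : Fin n, x i.succ ∈ D ∧ g (x i.succ) = y i.castSucc) ∧
    y (Fin.last n) ∉ g '' D


private lemma tsum_geom_half (ε : ℝ≥0∞) : ∑' i : ℕ, ε / 2 ^ (i + 1) = ε := by
  have h1 : ∀ i : ℕ, ε / 2 ^ (i + 1) = ε * (2⁻¹ : ℝ≥0∞) ^ (i + 1) := by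
    intro i
    rw [div_eq_mul_inv, ← ENNReal.inv_pow]
  simp_rw [h1]
  rw [ENNReal.tsum_mul_left]
  have h2 : ∑' i : ℕ, (2⁻¹ : ℝ≥0∞) ^ (i + 1) = 2⁻¹ * ∑' i : ℕ, (2⁻¹ : ℝ≥0∞) ^ i := by
    rw [← ENNReal.tsum_mul_left]
    congr 1
    ext i
    rw [pow_succ, mul_comm]
  rw [h2, ENNReal.tsum_geometric, ENNReal.one_sub_inv_two, inv_inv,
    ENNReal.inv_mul_cancel (by norm_num) (by norm_num), mul_one]

private lemma analyticSet_exists_measurable_subset_aux {Y : Type*} [TopologicalSpace Y]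
    [PolishSpace Y] [MeasurableSpace Y] [BorelSpace Y]
    (ν : Measure Y) [IsFiniteMeasure ν] {s : Set Y} (hs : MeasureTheory.AnalyticSet s)
    {ε : ℝ≥0∞} (hε : ε ≠ 0) :
    ∃ K : Set Y, MeasurableSet K ∧ K ⊆ s ∧ ν s ≤ ν K + ε := by
  letI := TopologicalSpace.upgradeIsCompletelyMetrizable Y
  rw [MeasureTheory.AnalyticSet] at hs
  rcases hs with rfl | ⟨f, hf, rfl⟩
  · exact ⟨∅, MeasurableSet.empty, Subset.rfl, by simp⟩
  set Tl : List ℕ → Set (ℕ → ℕ) := fun l => {x | ∀ i, i < l.length → x i ≤ l.getD i 0} with hTl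
  have hTl_union : ∀ l : List ℕ, Tl l = ⋃ m : ℕ, Tl (l ++ [m]) := by
    intro l
    ext x
    simp only [mem_iUnion, hTl, mem_setOf_eq, List.length_append, List.length_cons,
      List.length_nil]
    constructor
    · intro h
      refine ⟨x l.length, fun i hi => ?_⟩
      rcases lt_or_ge i l.length with h' | h'
      · rw [List.getD_append _ _ _ _ h']; exact h i h'
      · have hieq : i = l.length := by omega
        subst hieq
        rw [List.getD_append_right _ _ _ _ le_rfl]
        simp
    · rintro ⟨m, hm⟩ i hi
      have := hm i (by omega)
      rwa [List.getD_append _ _ _ _ hi] at this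
  have hTl_mono : ∀ (l : List ℕ) (m m' : ℕ), m ≤ m' → Tl (l ++ [m]) ⊆ Tl (l ++ [m']) := by
    intro l m m' hmm x hx i hi
    simp only [List.length_append, List.length_cons, List.length_nil] at hi
    rcases lt_or_ge i l.length with h' | h'
    · rw [List.getD_append _ _ _ _ h']
      have := hx i (by simp; omega)
      rwa [List.getD_append _ _ _ _ h'] at this
    · have hieq : i = l.length := by omega
      subst hieq
      rw [List.getD_append_right _ _ _ _ le_rfl]
      have := hx l.length (by simp)
      rw [List.getD_append_right _ _ _ _ le_rfl] at this
      simp only [Nat.sub_self] at this ⊢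
      simp only [List.getD_cons_zero] at this ⊢
      omega
  have hTl_sub : ∀ (l : List ℕ) (m : ℕ), Tl (l ++ [m]) ⊆ Tl l := by
    intro l m x hx i hi
    have := hx i (by simp; omega)
    rwa [List.getD_append _ _ _ _ hi] at this
  have hpick : ∀ l : List ℕ, ∃ m : ℕ,
      ν (f '' Tl l) ≤ ν (f '' Tl (l ++ [m])) + ε / 2 ^ (l.length + 1) := by
    intro l
    have hδ0 : ε / 2 ^ (l.length + 1) ≠ 0 := by
      simp [ENNReal.div_eq_zero_iff, hε, (ENNReal.pow_ne_top (by norm_num : (2:ℝ≥0∞) ≠ ⊤))]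
    have hsup : ν (f '' Tl l) = ⨆ m, ν (f '' Tl (l ++ [m])) := by
      rw [hTl_union l, image_iUnion]
      exact Directed.measure_iUnion (fun m m' => ⟨max m m',
        image_mono (hTl_mono _ _ _ (le_max_left _ _)),
        image_mono (hTl_mono _ _ _ (le_max_right _ _))⟩)
    rcases eq_or_ne (⨆ m, ν (f '' Tl (l ++ [m]))) 0 with h0 | h0
    · exact ⟨0, by rw [hsup, h0]; exact zero_le⟩
    · have hlt : (⨆ m, ν (f '' Tl (l ++ [m]))) - ε / 2 ^ (l.length + 1)
          < ⨆ m, ν (f '' Tl (l ++ [m])) :=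
        ENNReal.sub_lt_self (by rw [← hsup]; exact measure_ne_top ν _) h0 hδ0
      rw [lt_iSup_iff] at hlt
      obtain ⟨m, hm⟩ := hlt
      exact ⟨m, by rw [hsup]; exact tsub_le_iff_right.mp hm.le⟩
  choose pick hpick using hpick
  set build : ℕ → List ℕ := fun k => Nat.rec [] (fun _ l => l ++ [pick l]) k with hbuild
  have hbuild_succ : ∀ k, build (k + 1) = build k ++ [pick (build k)] := fun k => rfl
  have hbuild_len : ∀ k, (build k).length = k := by
    intro k
    induction k with
    | zero => rfl
    | succ k ih => rw [hbuild_succ]; simp [ih]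
  have hinv : ∀ k, ν (range f) ≤ ν (f '' Tl (build k)) + ∑ i ∈ Finset.range k, ε / 2 ^ (i + 1) := by
    intro k
    induction k with
    | zero =>
      have : Tl (build 0) = univ := by
        ext x; simp [hTl]
        intro i hi
        simp [hbuild] at hi
      rw [this, image_univ]
      simp
    | succ k ih =>
      calc ν (range f) ≤ ν (f '' Tl (build k)) + ∑ i ∈ Finset.range k, ε / 2 ^ (i + 1) := ih
        _ ≤ (ν (f '' Tl (build (k + 1))) + ε / 2 ^ ((build k).length + 1))
            + ∑ i ∈ Finset.range k, ε / 2 ^ (i + 1) := by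
            rw [hbuild_succ]
            exact add_le_add_left (hpick (build k)) _
        _ = ν (f '' Tl (build (k + 1))) + ∑ i ∈ Finset.range (k + 1), ε / 2 ^ (i + 1) := by
            rw [hbuild_len, Finset.sum_range_succ]
            ring
  have hsum : ∀ k, (∑ i ∈ Finset.range k, ε / 2 ^ (i + 1)) ≤ ε := by
    intro k
    calc (∑ i ∈ Finset.range k, ε / 2 ^ (i + 1)) ≤ ∑' i : ℕ, ε / 2 ^ (i + 1) :=
          ENNReal.sum_le_tsum _
      _ = ε := tsum_geom_half ε
  set A : ℕ → Set Y := fun k => closure (f '' Tl (build k)) with hA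
  have hAmeas : ∀ k, MeasurableSet (A k) := fun k => isClosed_closure.measurableSet
  have hAanti : Antitone A := by
    apply antitone_nat_of_succ_le
    intro k
    apply closure_mono
    apply image_mono
    rw [hbuild_succ]
    exact hTl_sub _ _
  refine ⟨⋂ k, A k, MeasurableSet.iInter (fun k => hAmeas k), ?_, ?_⟩
  · -- subset of range f
    intro y hy
    have hz : ∀ k : ℕ, ∃ x, x ∈ Tl (build k) ∧ dist (f x) y < 1 / (k + 1) := by
      intro k
      have hyk : y ∈ closure (f '' Tl (build k)) := mem_iInter.mp hy k
      rcases Metric.mem_closure_iff.mp hyk (1 / (k + 1)) (by positivity) with ⟨b, hb, hdist⟩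
      rcases hb with ⟨x, hx, rfl⟩
      exact ⟨x, hx, by rwa [dist_comm]⟩
    choose z hzT hzd using hz
    set nb : ℕ → ℕ := fun i => (build (i + 1)).getD i 0 with hnb
    have key : ∀ k i, i < k → (build k).getD i 0 = nb i := by
      intro k
      induction k with
      | zero => omega
      | succ k ih =>
        intro i hik
        rcases Nat.lt_or_ge i k with h | h
        · rw [hbuild_succ, List.getD_append _ _ _ _ (by rw [hbuild_len]; exact h)]
          exact ih i h
        · have : i = k := by omega
          subst this
          rfl
    have hz_bound : ∀ k i, i < k → z k i ≤ nb i := by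
      intro k i hik
      have h1 := hzT k i (by rw [hbuild_len]; exact hik)
      rwa [key k i hik] at h1
    set F : ℕ → Set ℕ := fun i => Iic (nb i) ∪ (fun k => z k i) '' Iic i with hF
    have hFfin : ∀ i, (F i).Finite := fun i => (finite_Iic _).union ((finite_Iic _).image _)
    have hC : IsCompact (Set.pi univ F) := isCompact_univ_pi (fun i => (hFfin i).isCompact)
    have hzC : ∀ k, z k ∈ Set.pi univ F := by
      intro k i _
      rcases Nat.lt_or_ge i k with h | h
      · exact Or.inl (hz_bound k i h)
      · exact Or.inr ⟨k, by simpa using h, rfl⟩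
    obtain ⟨x, -, φ, hφ, hconv⟩ := hC.tendsto_subseq hzC
    have h1 : Tendsto (fun j => f (z (φ j))) atTop (𝓝 (f x)) := (hf.tendsto x).comp hconv
    have h2 : Tendsto (fun k => f (z k)) atTop (𝓝 y) := by
      rw [tendsto_iff_dist_tendsto_zero]
      apply squeeze_zero (fun k => dist_nonneg) (fun k => (hzd k).le)
      exact tendsto_one_div_add_atTop_nhds_zero_nat
    exact ⟨x, tendsto_nhds_unique h1 (h2.comp hφ.tendsto_atTop)⟩
  · -- measure bound
    have hν : ν (⋂ k, A k) = ⨅ k, ν (A k) :=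
      Directed.measure_iInter (fun k => (hAmeas k).nullMeasurableSet)
        (hAanti.directed_ge) ⟨0, measure_ne_top ν _⟩
    rw [hν, ENNReal.iInf_add]
    refine le_iInf fun k => ?_
    calc ν (range f) ≤ ν (f '' Tl (build k)) + ∑ i ∈ Finset.range k, ε / 2 ^ (i + 1) := hinv k
      _ ≤ ν (A k) + ε := add_le_add (measure_mono subset_closure) (hsum k)

private lemma analyticSet_exists_measurable_subset' {Y : Type*} [TopologicalSpace Y]
    [PolishSpace Y] [MeasurableSpace Y] [BorelSpace Y]
    (ν : Measure Y) [IsFiniteMeasure ν] {s : Set Y} (hs : MeasureTheory.AnalyticSet s) :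
    ∃ K : Set Y, MeasurableSet K ∧ K ⊆ s ∧ ν s ≤ ν K := by
  have h : ∀ j : ℕ, ∃ K : Set Y, MeasurableSet K ∧ K ⊆ s ∧ ν s ≤ ν K + (↑(j + 1) : ℝ≥0∞)⁻¹ := by
    intro j
    exact analyticSet_exists_measurable_subset_aux ν hs
      (ENNReal.inv_ne_zero.mpr (ENNReal.natCast_ne_top (j + 1)))
  choose K hKm hKs hKb using h
  refine ⟨⋃ j, K j, MeasurableSet.iUnion hKm, iUnion_subset hKs, ?_⟩
  refine ENNReal.le_of_forall_pos_le_add fun δ hδ hfin => ?_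
  obtain ⟨j, hj⟩ := ENNReal.exists_inv_nat_lt (show ((δ : ℝ≥0∞)) ≠ 0 by
    simpa using hδ.ne')
  calc ν s ≤ ν (K j) + (↑(j + 1) : ℝ≥0∞)⁻¹ := hKb j
    _ ≤ ν (⋃ j, K j) + ↑δ := add_le_add (measure_mono (subset_iUnion K j))
        (le_trans (ENNReal.inv_le_inv.mpr (by exact_mod_cast Nat.le_succ j)) hj.le)

private def Ppath {X Y : Type*} (R : Set (X × Y)) (D : Set X) (g : X → Y) (m : ℕ)
    (x : ℕ → X) (y : ℕ → Y) : Prop :=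
  x 0 ∉ D ∧ (∀ i ≤ m, (x i, y i) ∈ R) ∧ (∀ i < m, x (i + 1) ∈ D ∧ g (x (i + 1)) = y i) ∧
    y m ∉ g '' D

private lemma ppath_to_aug {X Y : Type*} {R : Set (X × Y)} {D : Set X} {g : X → Y}
    (hinj : Set.InjOn g D) :
    ∀ (m : ℕ) (x : ℕ → X) (y : ℕ → Y), Ppath R D g m x y →
      ∃ m' ≤ m, ∃ (x' : Fin (m' + 1) → X) (y' : Fin (m' + 1) → Y),
        IsAugPath R D g m' x' y' := by
  intro m
  induction m using Nat.strong_induction_on with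
  | _ m IH =>
    intro x y hp
    obtain ⟨h0, hRp, hgp, hlast⟩ := hp
    by_cases hy : ∀ i ≤ m, ∀ j ≤ m, y i = y j → i = j
    · refine ⟨m, le_rfl, fun i => x i, fun i => y i, ?_, ?_, ?_, ?_, ?_⟩
      · simpa using h0
      · intro a b hab
        exact Fin.ext (hy a (Nat.lt_succ_iff.mp a.isLt) b (Nat.lt_succ_iff.mp b.isLt) hab)
      · exact fun i => hRp i (Nat.lt_succ_iff.mp i.isLt)
      · intro i
        have h := hgp i i.isLt
        constructor
        · simpa [Fin.val_succ] using h.1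
        · simpa [Fin.val_succ, Fin.coe_castSucc] using h.2
      · simpa [Fin.val_last] using hlast
    · push_neg at hy
      obtain ⟨i0, hi0, j0, hj0, hy0, hne0⟩ := hy
      obtain ⟨i, j, hij, hjm, hyeq⟩ : ∃ i j, i < j ∧ j ≤ m ∧ y i = y j := by
        rcases hne0.lt_or_gt with h | h
        · exact ⟨i0, j0, h, hj0, hy0⟩
        · exact ⟨j0, i0, h, hi0, hy0.symm⟩
      have hjm' : j < m := by
        by_contra hcon
        have hjeq : j = m := by omega
        subst hjeq
        exact hlast ⟨x (i + 1), (hgp i hij).1, ((hgp i hij).2).trans hyeq⟩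
      have him : i < m := lt_trans hij hjm'
      have hxx : x (i + 1) = x (j + 1) := by
        apply hinj (hgp i him).1 (hgp j hjm').1
        rw [(hgp i him).2, (hgp j hjm').2, hyeq]
      set d := j - i with hd
      have hd0 : 0 < d := by omega
      have hdm : d < m := by omega
      set x2 : ℕ → X := fun t => if t ≤ i then x t else x (t + d) with hx2
      set y2 : ℕ → Y := fun t => if t ≤ i then y t else y (t + d) with hy2
      have hm'm : m - d + d = m := by omega
      have him' : i < m - d := by omega
      have hpp : Ppath R D g (m - d) x2 y2 := by
        refine ⟨?_, ?_, ?_, ?_⟩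
        · simpa [hx2] using h0
        · intro t ht
          by_cases h : t ≤ i
          · simpa [hx2, hy2, h] using hRp t (by omega)
          · simpa [hx2, hy2, h] using hRp (t + d) (by omega)
        · intro t ht
          rcases lt_trichotomy t i with h | h | h
          · have h1 : t + 1 ≤ i := h
            simpa [hx2, hy2, h1, h.le] using hgp t (by omega)
          · subst h
            have e1 : ¬ (t + 1 ≤ t) := by omega
            have e2 : t + 1 + d = j + 1 := by omega
            refine ⟨?_, ?_⟩
            · simp only [hx2, if_neg e1, e2]
              exact (hgp j hjm').1
            · simp only [hx2, hy2, if_neg e1, if_pos le_rfl, e2]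
              rw [(hgp j hjm').2]
              exact hyeq.symm
          · have e1 : ¬ (t + 1 ≤ i) := by omega
            have e2 : ¬ (t ≤ i) := by omega
            have e3 : t + 1 + d = t + d + 1 := by omega
            simp only [hx2, hy2, if_neg e1, if_neg e2, e3]
            exact hgp (t + d) (by omega)
        · have e1 : ¬ (m - d ≤ i) := by omega
          simp only [hy2, if_neg e1, hm'm]
          exact hlast
      obtain ⟨m', hm'le, rest⟩ := IH (m - d) (by omega) x2 y2 hpp
      exact ⟨m', by omega, rest⟩


/-- If the Borel partial injection `g` (with Borel domain `D`) compatible with `R` admits no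
augmenting path of length less than `n`, then `μ(X ∖ dom g) ≤ c⁻ⁿ`. -/
theorem stmt1 {X Y : Type*} [MeasurableSpace X] [StandardBorelSpace X]
    [MeasurableSpace Y] [StandardBorelSpace Y]
    (μ : Measure X) [IsProbabilityMeasure μ] (ν : Measure Y)
    (R : Set (X × Y)) (hR : MeasurableSet R)
    (hlocX : ∀ x : X, {y | (x, y) ∈ R}.Finite)
    (hlocY : ∀ y : Y, {x | (x, y) ∈ R}.Finite)
    (hpres : MeasurePreservingRel R μ ν)
    (c : ℝ≥0∞) (hc : 1 < c)
    (hexp : ∀ A : Set X, MeasurableSet A → c * μ A ≤ ν {y | ∃ x ∈ A, (x, y) ∈ R})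
    (n : ℕ) (D : Set X) (g : X → Y) (hD : MeasurableSet D) (hg : Measurable g)
    (hinj : Set.InjOn g D) (hcomp : ∀ x ∈ D, (x, g x) ∈ R)
    (hnoaug : ∀ m, m < n → ∀ (x : Fin (m + 1) → X) (y : Fin (m + 1) → Y),
      ¬ IsAugPath R D g m x y) :
    μ Dᶜ ≤ c⁻¹ ^ n := by
  classical
  have hYne : Nonempty Y := by
    by_contra h
    rw [not_nonempty_iff] at h
    have h1 := hexp univ MeasurableSet.univ
    rw [measure_univ, mul_one] at h1
    have h2 : {y : Y | ∃ x ∈ (univ : Set X), (x, y) ∈ R} = ∅ := eq_empty_of_isEmpty _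
    rw [h2, measure_empty] at h1
    exact absurd (le_trans hc.le h1) (by simp)
  letI := upgradeStandardBorel Y
  have hgD : MeasurableSet (g '' D) := hD.image_of_measurable_injOn hg hinj
  have hνgD : ν (g '' D) = μ D := (hpres D g hD hg hinj hcomp).symm
  set ν' := ν.restrict (g '' D) with hν'
  haveI : IsFiniteMeasure ν' := by
    constructor
    rw [hν', Measure.restrict_apply_univ, hνgD]
    exact measure_lt_top μ D
  set Reach : ℕ → Set X := fun k => {a | ∃ m ≤ k, ∃ x : ℕ → X, ∃ y : ℕ → Y,
    (x 0 ∉ D ∧ (∀ i < m, (x i, y i) ∈ R) ∧ (∀ i < m, x (i + 1) ∈ D ∧ g (x (i + 1)) = y i))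
      ∧ x m = a} with hReach
  have hReach0 : Dᶜ ⊆ Reach 0 := by
    intro a ha
    exact ⟨0, le_rfl, fun _ => a, fun _ => hYne.some, ⟨ha, by omega, by omega⟩, rfl⟩
  have hsafe : ∀ k, k < n → {y | ∃ x ∈ Reach k, (x, y) ∈ R} ⊆ g '' D := by
    intro k hk y' hy'
    by_contra hy'D
    obtain ⟨a, ⟨m, hm, x, y, ⟨h0, hR1, hg1⟩, hxm⟩, haR⟩ := hy'
    have hpp : Ppath R D g m x (Function.update y m y') := by
      refine ⟨h0, ?_, ?_, ?_⟩
      · intro i hi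
        rcases eq_or_lt_of_le hi with rfl | hi'
        · rw [Function.update_self, hxm]; exact haR
        · rw [Function.update_of_ne (by omega)]; exact hR1 i hi'
      · intro i hi
        rw [Function.update_of_ne (by omega)]
        exact hg1 i hi
      · rw [Function.update_self]; exact hy'D
    obtain ⟨m', hm', x', y', hap⟩ := ppath_to_aug hinj m x _ hpp
    exact hnoaug m' (by omega) x' y' hap
  have hstep : ∀ (k : ℕ) (M : Set Y), M ⊆ {y | ∃ x ∈ Reach k, (x, y) ∈ R} →
      D ∩ g ⁻¹' M ⊆ Reach (k + 1) := by
    rintro k M hM a ⟨haD, haM⟩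
    obtain ⟨a', ⟨m, hm, x, y, ⟨h0, hR1, hg1⟩, hxm⟩, ha'R⟩ := hM haM
    refine ⟨m + 1, by omega, Function.update x (m + 1) a, Function.update y m (g a),
      ⟨?_, ?_, ?_⟩, ?_⟩
    · rw [Function.update_of_ne (by omega)]; exact h0
    · intro i hi
      rcases eq_or_lt_of_le (Nat.lt_succ_iff.mp hi) with rfl | hi'
      · rw [Function.update_of_ne (by omega), Function.update_self, hxm]; exact ha'R
      · rw [Function.update_of_ne (by omega), Function.update_of_ne (by omega)]
        exact hR1 i hi'
    · intro i hi
      rcases eq_or_lt_of_le (Nat.lt_succ_iff.mp hi) with rfl | hi'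
      · rw [Function.update_self, Function.update_self]; exact ⟨haD, rfl⟩
      · rw [Function.update_of_ne (by omega), Function.update_of_ne (by omega)]
        exact hg1 i hi'
    · rw [Function.update_self]
  have main : ∀ k, k ≤ n → ∃ B : Set X, MeasurableSet B ∧ B ⊆ Reach k ∧ c ^ k * μ Dᶜ ≤ μ B := by
    intro k
    induction k with
    | zero => exact fun _ => ⟨Dᶜ, hD.compl, hReach0, by simp⟩
    | succ k ih =>
      intro hk
      obtain ⟨B, hBmeas, hBsub, hBbd⟩ := ih (by omega)
      have hNNmono : {y | ∃ x ∈ B, (x, y) ∈ R} ⊆ {y | ∃ x ∈ Reach k, (x, y) ∈ R} := by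
        rintro y ⟨x, hx, hxy⟩; exact ⟨x, hBsub hx, hxy⟩
      have hNNgD : {y | ∃ x ∈ B, (x, y) ∈ R} ⊆ g '' D :=
        hNNmono.trans (hsafe k (by omega))
      have hanal : MeasureTheory.AnalyticSet {y | ∃ x ∈ B, (x, y) ∈ R} := by
        have heq : {y | ∃ x ∈ B, (x, y) ∈ R} = Prod.snd '' (R ∩ B ×ˢ (univ : Set Y)) := by
          ext y
          constructor
          · rintro ⟨x, hx, hxy⟩; exact ⟨(x, y), ⟨hxy, hx, trivial⟩, rfl⟩
          · rintro ⟨⟨x, y'⟩, ⟨hxy, hx, -⟩, rfl⟩; exact ⟨x, hx, hxy⟩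
        rw [heq]
        exact (hR.inter (hBmeas.prod MeasurableSet.univ)).analyticSet_image measurable_snd
      obtain ⟨K, hKmeas, hKsub, hKbd⟩ := analyticSet_exists_measurable_subset' ν' hanal
      have hKgD : K ⊆ g '' D := hKsub.trans hNNgD
      refine ⟨D ∩ g ⁻¹' K, hD.inter (hg hKmeas), hstep k K (hKsub.trans hNNmono), ?_⟩
      have himg : g '' (D ∩ g ⁻¹' K) = K := by
        rw [image_inter_preimage]
        exact inter_eq_self_of_subset_right hKgD
      have hμeq : μ (D ∩ g ⁻¹' K) = ν K :=
        (hpres (D ∩ g ⁻¹' K) g (hD.inter (hg hKmeas)) hg (hinj.mono inter_subset_left)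
          (fun x hx => hcomp x hx.1)).trans (by rw [himg])
      have c1 : ν' {y | ∃ x ∈ B, (x, y) ∈ R} = ν {y | ∃ x ∈ B, (x, y) ∈ R} := by
        rw [hν', Measure.restrict_apply' hgD, inter_eq_self_of_subset_left hNNgD]
      have c2 : ν' K = ν K := by
        rw [hν', Measure.restrict_apply' hgD, inter_eq_self_of_subset_left hKgD]
      calc c ^ (k + 1) * μ Dᶜ = c * (c ^ k * μ Dᶜ) := by rw [pow_succ]; ring
        _ ≤ c * μ B := mul_le_mul_right hBbd c
        _ ≤ ν {y | ∃ x ∈ B, (x, y) ∈ R} := hexp B hBmeas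
        _ = ν' {y | ∃ x ∈ B, (x, y) ∈ R} := c1.symm
        _ ≤ ν' K := hKbd
        _ = ν K := c2
        _ = μ (D ∩ g ⁻¹' K) := hμeq.symm
  obtain ⟨B, hBmeas, -, hBbd⟩ := main n le_rfl
  have h1 : c ^ n * μ Dᶜ ≤ 1 := hBbd.trans ((measure_mono (subset_univ B)).trans measure_univ.le)
  rw [← ENNReal.inv_pow, ENNReal.le_inv_iff_mul_le, mul_comm]
  exact h1
end

section
/- Every locally finite Borel graph on a standard Borel space has a Borel ℕ-coloring, i.e., a Borel function c : X → ℕ such that c(x) ≠ c(y) whenever x and y are adjacent. -/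
open MeasureTheory Set PiNat Function

section Novikov
variable {α : Type*} [TopologicalSpace α] [T2Space α] [MeasurableSpace α] [OpensMeasurableSpace α]

/-- Borel separation of a countable family of cylinder images. -/
def MSep (f : ℕ → (ℕ → ℕ) → α) (ℓ : ℕ → ℕ) (σ : ℕ → ℕ → ℕ) : Prop :=
  ∃ B : ℕ → Set α, (∀ n, MeasurableSet (B n)) ∧ (∀ n, f n '' cylinder (σ n) (ℓ n) ⊆ B n) ∧
    (⋂ n, B n) = ∅

lemma msep_refine {f : ℕ → (ℕ → ℕ) → α} {ℓ : ℕ → ℕ} {σ : ℕ → ℕ → ℕ} (m : ℕ)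
    (h : ¬ MSep f ℓ σ) :
    ∃ τ : ℕ → ℕ, τ ∈ cylinder (σ m) (ℓ m) ∧
      ¬ MSep f (update ℓ m (ℓ m + 1)) (update σ m τ) := by
  by_contra hc
  push_neg at hc
  apply h
  have key : ∀ k : ℕ, MSep f (update ℓ m (ℓ m + 1)) (update σ m (update (σ m) (ℓ m) k)) :=
    fun k => hc _ (update_mem_cylinder _ _ _)
  choose B hBm hBc hBe using key
  refine ⟨fun n => if n = m then ⋃ k, B k m else ⋂ k, B k n, ?_, ?_, ?_⟩
  · intro n
    rcases eq_or_ne n m with rfl | hnm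
    · simp only [if_pos rfl]
      exact MeasurableSet.iUnion fun k => hBm k n
    · simp only [if_neg hnm]
      exact MeasurableSet.iInter fun k => hBm k n
  · intro n
    rcases eq_or_ne n m with rfl | hnm
    · simp only [if_pos rfl]
      rw [← iUnion_cylinder_update (σ n) (ℓ n), image_iUnion]
      refine iUnion_subset fun k => ?_
      refine (subset_iUnion (fun k => B k n) k).trans' ?_
      have := hBc k n
      simpa only [update_self] using this
    · simp only [if_neg hnm]
      refine subset_iInter fun k => ?_
      have := hBc k n
      rwa [update_of_ne hnm, update_of_ne hnm] at this
  · ext z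
    simp only [mem_iInter, mem_empty_iff_false, iff_false]
    intro hz
    have hzm := hz m
    rw [if_pos rfl] at hzm
    obtain ⟨k, hk⟩ : ∃ k, z ∈ B k m := by simpa using hzm
    have : z ∈ ⋂ n, B k n := by
      refine mem_iInter.2 fun n => ?_
      rcases eq_or_ne n m with rfl | hnm
      · exact hk
      · have := hz n
        rw [if_neg hnm] at this
        exact mem_iInter.1 this k
    rw [hBe k] at this
    exact this

theorem novikov_ranges {f : ℕ → (ℕ → ℕ) → α} (hf : ∀ n, Continuous (f n))
    (hdisj : (⋂ n, range (f n)) = ∅) :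
    ∃ B : ℕ → Set α, (∀ n, MeasurableSet (B n)) ∧ (∀ n, range (f n) ⊆ B n) ∧ (⋂ n, B n) = ∅ := by
  by_contra h0
  have h0' : ¬ MSep f (fun _ => 0) (fun _ _ => 0) := by
    rintro ⟨B, h1, h2, h3⟩
    exact h0 ⟨B, h1, fun n => by simpa [cylinder_zero] using h2 n, h3⟩
  let St := {q : (ℕ → ℕ) × (ℕ → ℕ → ℕ) // ¬ MSep f q.1 q.2}
  have H : ∀ (m : ℕ) (q : St), ∃ τ : ℕ → ℕ, τ ∈ cylinder (q.1.2 m) (q.1.1 m) ∧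
      ¬ MSep f (update q.1.1 m (q.1.1 m + 1)) (update q.1.2 m τ) := fun m q => msep_refine m q.2
  choose T hT1 hT2 using H
  let F : ℕ → St → St := fun m q => ⟨(update q.1.1 m (q.1.1 m + 1), update q.1.2 m (T m q)), hT2 m q⟩
  let p : ℕ → St := fun t => Nat.rec (⟨(fun _ => 0, fun _ _ => 0), h0'⟩ : St)
    (fun t q => F (Nat.unpair t).1 q) t
  have lstep : ∀ t, (p (t + 1)).1.1
      = update ((p t).1.1) (Nat.unpair t).1 ((p t).1.1 (Nat.unpair t).1 + 1) := fun t => rfl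
  have sstep : ∀ t, (p (t + 1)).1.2
      = update ((p t).1.2) (Nat.unpair t).1 (T (Nat.unpair t).1 (p t)) := fun t => rfl
  have lmono : ∀ n, Monotone fun t => (p t).1.1 n := by
    intro n
    refine monotone_nat_of_le_succ fun t => ?_
    show (p t).1.1 n ≤ (p (t+1)).1.1 n
    rw [lstep t]
    rcases eq_or_ne n (Nat.unpair t).1 with rfl | hn
    · rw [update_self]; exact Nat.le_succ _
    · rw [update_of_ne hn]
  have sfreeze : ∀ s t, s ≤ t → ∀ n i, i < (p s).1.1 n → (p t).1.2 n i = (p s).1.2 n i := by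
    intro s
    refine Nat.le_induction (fun n i _ => rfl) ?_
    intro t hst IH n i hi
    rw [sstep t]
    rcases eq_or_ne n (Nat.unpair t).1 with rfl | hn
    · rw [update_self]
      have h2 : T (Nat.unpair t).1 (p t) i = (p t).1.2 (Nat.unpair t).1 i :=
        mem_cylinder_iff.1 (hT1 _ (p t)) i (lt_of_lt_of_le hi (lmono _ hst))
      rw [h2, IH _ i hi]
    · rw [update_of_ne hn]; exact IH n i hi
  have growth : ∀ n k, k < (p (Nat.pair n k + 1)).1.1 n := by
    intro n k
    induction k with
    | zero =>
      have hm : (Nat.unpair (Nat.pair n 0)).1 = n := by simp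
      rw [lstep, hm, update_self]
      exact Nat.succ_pos _
    | succ k IH =>
      have h1 : Nat.pair n k + 1 ≤ Nat.pair n (k + 1) :=
        Nat.pair_lt_pair_right n (Nat.lt_succ_self k)
      have h2 : k < (p (Nat.pair n (k + 1))).1.1 n := lt_of_lt_of_le IH (lmono n h1)
      have hm : (Nat.unpair (Nat.pair n (k + 1))).1 = n := by simp
      rw [lstep, hm, update_self]
      omega
  have agree : ∀ t n i, i < (p t).1.1 n →
      (p t).1.2 n i = (p (Nat.pair n i + 1)).1.2 n i := by
    intro t n i hi
    rcases le_total t (Nat.pair n i + 1) with h | h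
    · exact (sfreeze t (Nat.pair n i + 1) h n i hi).symm
    · exact sfreeze (Nat.pair n i + 1) t h n i (growth n i)
  set x : ℕ → ℕ → ℕ := fun n i => (p (Nat.pair n i + 1)).1.2 n i with hx
  have key : ∀ t n N, N ≤ (p t).1.1 n →
      cylinder ((p t).1.2 n) ((p t).1.1 n) ⊆ cylinder (x n) N := by
    intro t n N hN z hz
    refine mem_cylinder_iff.2 fun i hi => ?_
    rw [mem_cylinder_iff.1 hz i (lt_of_lt_of_le hi hN), agree t n i (lt_of_lt_of_le hi hN)]
  have alleq : ∀ n n', f n (x n) = f n' (x n') := by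
    intro n n'
    by_contra hne
    have hnn' : n ≠ n' := by rintro rfl; exact hne rfl
    obtain ⟨u, v, u_open, v_open, xu, yv, huv⟩ := t2_separation hne
    letI : MetricSpace (ℕ → ℕ) := metricSpaceNatNat
    obtain ⟨εx, εxpos, hεx⟩ : ∃ εx : ℝ, εx > 0 ∧ Metric.ball (x n) εx ⊆ f n ⁻¹' u :=
      Metric.mem_nhds_iff.1 ((hf n).continuousAt.preimage_mem_nhds (u_open.mem_nhds xu))
    obtain ⟨εy, εypos, hεy⟩ : ∃ εy : ℝ, εy > 0 ∧ Metric.ball (x n') εy ⊆ f n' ⁻¹' v :=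
      Metric.mem_nhds_iff.1 ((hf n').continuousAt.preimage_mem_nhds (v_open.mem_nhds yv))
    obtain ⟨N, hN⟩ : ∃ N : ℕ, (1 / 2 : ℝ) ^ N < min εx εy :=
      exists_pow_lt_of_lt_one (lt_min εxpos εypos) (by norm_num)
    have hln : N ≤ (p (max (Nat.pair n N + 1) (Nat.pair n' N + 1))).1.1 n :=
      le_of_lt (lt_of_lt_of_le (growth n N)
        (lmono n (le_max_left (Nat.pair n N + 1) (Nat.pair n' N + 1))))
    have hln' : N ≤ (p (max (Nat.pair n N + 1) (Nat.pair n' N + 1))).1.1 n' :=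
      le_of_lt (lt_of_lt_of_le (growth n' N)
        (lmono n' (le_max_right (Nat.pair n N + 1) (Nat.pair n' N + 1))))
    set t := max (Nat.pair n N + 1) (Nat.pair n' N + 1) with ht
    have hcyln : cylinder (x n) N ⊆ f n ⁻¹' u := by
      intro z hz
      apply hεx
      exact lt_of_le_of_lt (mem_cylinder_iff_dist_le.1 hz) (hN.trans_le (min_le_left _ _))
    have hcyln' : cylinder (x n') N ⊆ f n' ⁻¹' v := by
      intro z hz
      apply hεy
      exact lt_of_le_of_lt (mem_cylinder_iff_dist_le.1 hz) (hN.trans_le (min_le_right _ _))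
    apply (p t).2
    refine ⟨fun k => if k = n then u else if k = n' then v else univ, ?_, ?_, ?_⟩
    · intro k
      rcases eq_or_ne k n with rfl | h1
      · simp only [if_pos rfl]; exact u_open.measurableSet
      rcases eq_or_ne k n' with rfl | h2
      · simp only [if_neg h1, if_pos rfl]; exact v_open.measurableSet
      · simp only [if_neg h1, if_neg h2]; exact MeasurableSet.univ
    · intro k
      rcases eq_or_ne k n with rfl | h1
      · simp only [if_pos rfl]
        rw [image_subset_iff]
        exact (key t k N hln).trans hcyln
      rcases eq_or_ne k n' with rfl | h2
      · simp only [if_neg h1, if_pos rfl]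
        rw [image_subset_iff]
        exact (key t k N hln').trans hcyln'
      · simp only [if_neg h1, if_neg h2]
        exact subset_univ _
    · ext z
      simp only [mem_iInter, mem_empty_iff_false, iff_false]
      intro hz
      have h1 := hz n
      rw [if_pos rfl] at h1
      have h2 := hz n'
      rw [if_neg (Ne.symm hnn'), if_pos rfl] at h2
      exact (disjoint_iff_forall_ne.1 huv) h1 h2 rfl
  have hmem : f 0 (x 0) ∈ ⋂ n, range (f n) :=
    mem_iInter.2 fun n => (alleq 0 n) ▸ mem_range_self (x n)
  rw [hdisj] at hmem
  exact hmem

/-- **Novikov's multiple separation theorem**. -/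
theorem novikov_analytic {A : ℕ → Set α} (hA : ∀ n, AnalyticSet (A n))
    (h : (⋂ n, A n) = ∅) :
    ∃ B : ℕ → Set α, (∀ n, MeasurableSet (B n)) ∧ (∀ n, A n ⊆ B n) ∧ (⋂ n, B n) = ∅ := by
  by_cases hne : ∃ n, A n = ∅
  · obtain ⟨n, hn⟩ := hne
    refine ⟨fun k => if k = n then ∅ else univ, fun k => ?_, fun k => ?_, ?_⟩
    · rcases eq_or_ne k n with rfl | h1
      · simp only [if_pos rfl]; exact MeasurableSet.empty
      · simp only [if_neg h1]; exact MeasurableSet.univ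
    · rcases eq_or_ne k n with rfl | h1
      · simp [hn]
      · simp only [if_neg h1]; exact subset_univ _
    · apply eq_empty_of_subset_empty
      intro z hz
      have := mem_iInter.1 hz n
      rwa [if_pos rfl] at this
  · push_neg at hne
    have hA' : ∀ n, ∃ f : (ℕ → ℕ) → α, Continuous f ∧ range f = A n := by
      intro n
      have := hA n
      rw [AnalyticSet] at this
      rcases this with h' | h'
      · exact absurd h' (hne n).ne_empty
      · exact h'
    choose f hfc hfr using hA'
    have := novikov_ranges (α := α) hfc (by simp_rw [hfr]; exact h)
    simp_rw [hfr] at this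
    exact this

end Novikov
section Covering
variable {α : Type*} [TopologicalSpace α] [T2Space α] [MeasurableSpace α] [OpensMeasurableSpace α]

theorem covering_form {A : Set α} {C : ℕ → Set α} (hA : AnalyticSet A) (hC : ∀ n, AnalyticSet (C n))
    (h : A ∩ (⋂ n, C n) = ∅) :
    ∃ D : ℕ → Set α, (∀ n, MeasurableSet (D n)) ∧ (∀ n, C n ⊆ D n) ∧
      ∃ D₀, MeasurableSet D₀ ∧ A ⊆ D₀ ∧ D₀ ∩ (⋂ n, D n) = ∅ := by
  have hEa : ∀ k, AnalyticSet ((fun k => Nat.casesOn k A C : ℕ → Set α) k) := fun k => by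
    cases k with
    | zero => exact hA
    | succ n => exact hC n
  have hEe : (⋂ k, (fun k => Nat.casesOn k A C : ℕ → Set α) k) = ∅ := by
    apply eq_empty_of_subset_empty
    rw [← h]
    intro z hz
    exact ⟨mem_iInter.1 hz 0, mem_iInter.2 fun n => mem_iInter.1 hz (n + 1)⟩
  obtain ⟨B, hBm, hBc, hBe⟩ := novikov_analytic hEa hEe
  refine ⟨fun n => B (n + 1), fun n => hBm _, fun n => hBc (n + 1), B 0, hBm 0, hBc 0, ?_⟩
  apply eq_empty_of_subset_empty
  rw [← hBe]
  rintro z ⟨hz0, hz⟩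
  exact mem_iInter.2 fun k => Nat.casesOn k hz0 fun n => mem_iInter.1 hz n

end Covering

section Cantor

abbrev Cant := ℕ → Bool

instance : PolishSpace Cant := instPolishSpaceOfSeparableSpaceOfIsCompletelyMetrizableSpace

/-- Projections of Borel sets with finite sections in the Cantor square are Borel
(a special case of the Luzin–Novikov / Novikov compact-section theorems). -/
theorem proj_measurable {B : Set (Cant × Cant)} (hB : MeasurableSet B)
    (hfin : ∀ x : Cant, {y | (x, y) ∈ B}.Finite) :
    MeasurableSet {x : Cant | ∃ y, (x, y) ∈ B} := by
  obtain ⟨b, hbc, -, hb⟩ := TopologicalSpace.exists_countable_basis Cant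
  obtain ⟨V, hV⟩ : ∃ V : ℕ → Set Cant, insert ∅ b = range V :=
    (hbc.insert ∅).exists_eq_range (insert_nonempty _ _)
  have hVmem : ∀ n, V n ∈ insert ∅ b := fun n => hV ▸ mem_range_self n
  have hVopen : ∀ n, IsOpen (V n) := by
    intro n
    rcases hVmem n with h | h
    · rw [h]; exact isOpen_empty
    · exact hb.isOpen h
  have hVb : ∀ s ∈ b, ∃ n, V n = s := by
    intro s hs
    have : s ∈ range V := hV ▸ mem_insert_of_mem _ hs
    exact this.imp fun n hn => hn
  set W : Set (Cant × Cant) := Bᶜ with hW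
  have hWmeas : MeasurableSet W := hB.compl
  have hWsec : ∀ x, IsOpen {y | (x, y) ∈ W} := by
    intro x
    have : {y | (x, y) ∈ W} = {y | (x, y) ∈ B}ᶜ := rfl
    rw [this]
    exact ((hfin x).isClosed).isOpen_compl
  set T : ℕ → Set Cant := fun n => {x | ∀ y ∈ closure (V n), (x, y) ∈ W} with hT
  -- complements of `T n` are analytic
  have hCeq : ∀ n, (T n)ᶜ = Prod.fst '' (B ∩ univ ×ˢ closure (V n)) := by
    intro n
    ext x
    simp only [hT, mem_compl_iff, mem_setOf_eq, not_forall, mem_image, mem_inter_iff,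
      mem_prod, mem_univ, true_and, Prod.exists, exists_and_right, exists_eq_right, hW,
      mem_compl_iff, not_not]
    tauto
  have hCanal : ∀ n, AnalyticSet (T n)ᶜ := by
    intro n
    rw [hCeq n]
    exact ((hB.inter (MeasurableSet.univ.prod isClosed_closure.measurableSet)).analyticSet).image_of_continuous
      continuous_fst
  -- coverage of `W` by the rectangles `T n ×ˢ V n`
  have hcover : W ⊆ ⋃ n, T n ×ˢ V n := by
    rintro ⟨x, y⟩ hxy
    have hyU : y ∈ {y' | (x, y') ∈ W} := hxy
    obtain ⟨t, htn, htc, hts⟩ := exists_mem_nhds_isClosed_subset ((hWsec x).mem_nhds hyU)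
    have hyint : y ∈ interior t := mem_interior_iff_mem_nhds.2 htn
    obtain ⟨v, hvb, hyv, hvsub⟩ := hb.exists_subset_of_mem_open hyint isOpen_interior
    obtain ⟨n, rfl⟩ := hVb v hvb
    refine mem_iUnion.2 ⟨n, ?_, hyv⟩
    intro y' hy'
    have : y' ∈ t := (htc.closure_subset_iff.2 (hvsub.trans interior_subset)) hy'
    exact hts this
  -- rectangles are co-analytic
  have hrect_anal : ∀ n, AnalyticSet (T n ×ˢ V n)ᶜ := by
    intro n
    rw [compl_prod_eq_union]
    have h1 : AnalyticSet ((T n)ᶜ ×ˢ (univ : Set Cant)) := by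
      have heq : (T n)ᶜ ×ˢ (univ : Set Cant) =
          (fun p : (Cant × Cant) × Cant => (p.1.1, p.2)) ''
            ((B ∩ univ ×ˢ closure (V n)) ×ˢ (univ : Set Cant)) := by
        ext ⟨x, z⟩
        constructor
        · rintro ⟨hx, -⟩
          rw [hCeq n] at hx
          obtain ⟨⟨x', y'⟩, hxy, rfl⟩ := hx
          exact ⟨((x', y'), z), ⟨hxy, trivial⟩, rfl⟩
        · rintro ⟨⟨⟨x', y'⟩, z'⟩, ⟨hxy, -⟩, h⟩
          dsimp only at h
          simp only [Prod.mk.injEq] at h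
          obtain ⟨rfl, rfl⟩ := h
          refine ⟨?_, trivial⟩
          rw [hCeq n]
          exact ⟨(x', y'), hxy, rfl⟩
      rw [heq]
      exact (((hB.inter (MeasurableSet.univ.prod isClosed_closure.measurableSet)).prod
        MeasurableSet.univ).analyticSet).image_of_continuous
        (continuous_fst.fst.prodMk continuous_snd)
    have h2 : AnalyticSet ((univ : Set Cant) ×ˢ (V n)ᶜ) :=
      (MeasurableSet.univ.prod (hVopen n).measurableSet.compl).analyticSet
    rw [Set.union_eq_iUnion]
    refine AnalyticSet.iUnion fun i => ?_
    cases i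
    · exact h2
    · exact h1
  -- apply the covering form
  have hWanal : AnalyticSet W := hWmeas.analyticSet
  have hdisj : W ∩ (⋂ n, (T n ×ˢ V n)ᶜ) = ∅ := by
    apply eq_empty_of_subset_empty
    rintro z ⟨hzW, hz⟩
    obtain ⟨n, hn⟩ := mem_iUnion.1 (hcover hzW)
    exact absurd hn (mem_iInter.1 hz n)
  obtain ⟨D, hDm, hDc, D₀, hD₀m, hD₀c, hD₀e⟩ := covering_form hWanal hrect_anal hdisj
  set Z : ℕ → Set (Cant × Cant) := fun n => D₀ ∩ (D n)ᶜ with hZ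
  have hZm : ∀ n, MeasurableSet (Z n) := fun n => hD₀m.inter (hDm n).compl
  have hZsub : ∀ n, Z n ⊆ T n ×ˢ V n := by
    intro n z hz
    by_contra hzn
    exact hz.2 (hDc n hzn)
  have hWZ : W ⊆ ⋃ n, Z n := by
    intro z hzW
    by_contra hz
    simp only [mem_iUnion, not_exists, hZ, mem_inter_iff, not_and, mem_compl_iff, not_not] at hz
    have : z ∈ D₀ ∩ ⋂ n, D n := ⟨hD₀c hzW, mem_iInter.2 fun n => hz n (hD₀c hzW)⟩
    rw [hD₀e] at this
    exact this
  -- Lusin separation to get Borel `T' n` between `fst '' Z n` and `T n`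
  have hsep : ∀ n, ∃ T' : Set Cant, MeasurableSet T' ∧ Prod.fst '' Z n ⊆ T' ∧ T' ⊆ T n := by
    intro n
    have hanal1 : AnalyticSet (Prod.fst '' Z n) :=
      ((hZm n).analyticSet).image_of_continuous continuous_fst
    have hdisj1 : Disjoint (Prod.fst '' Z n) (T n)ᶜ := by
      rw [disjoint_compl_right_iff_subset]
      rintro x ⟨⟨x', y'⟩, hz, rfl⟩
      exact (hZsub n hz).1
    obtain ⟨u, hsu, hdu, hmu⟩ := hanal1.measurablySeparable (hCanal n) hdisj1
    refine ⟨u, hmu, hsu, ?_⟩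
    intro x hx
    by_contra hxT
    exact (disjoint_left.1 hdu) hxT hx
  choose T' hT'm hT'sub1 hT'sub2 using hsep
  -- the rectangle decomposition
  have hWrect : W = ⋃ n, T' n ×ˢ V n := by
    apply Subset.antisymm
    · intro z hzW
      obtain ⟨n, hn⟩ := mem_iUnion.1 (hWZ hzW)
      refine mem_iUnion.2 ⟨n, ?_, (hZsub n hn).2⟩
      exact hT'sub1 n ⟨z, hn, rfl⟩
    · rintro ⟨x, y⟩ hz
      obtain ⟨n, hn⟩ := mem_iUnion.1 hz
      exact hT'sub2 n hn.1 y (subset_closure hn.2)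
  -- full sections via compactness
  have hfull : {x : Cant | ∀ y, (x, y) ∈ W} =
      ⋃ (S : Finset ℕ) (_ : (⋃ n ∈ S, V n) = univ), ⋂ n ∈ S, T' n := by
    ext x
    simp only [mem_setOf_eq, mem_iUnion]
    constructor
    · intro hx
      have hcov : (univ : Set Cant) ⊆ ⋃ i : {n // x ∈ T' n}, V i := by
        intro y _
        have : (x, y) ∈ ⋃ n, T' n ×ˢ V n := hWrect ▸ hx y
        obtain ⟨n, hn⟩ := mem_iUnion.1 this
        exact mem_iUnion.2 ⟨⟨n, hn.1⟩, hn.2⟩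
      obtain ⟨t, ht⟩ := isCompact_univ.elim_finite_subcover
        (fun i : {n // x ∈ T' n} => V i) (fun i => hVopen i) hcov
      refine ⟨t.image Subtype.val, ?_, ?_⟩
      · apply Subset.antisymm (subset_univ _)
        intro y hy
        obtain ⟨i, hit, hyi⟩ := by
          simpa only [mem_iUnion, exists_prop] using ht (mem_univ y)
        simp only [mem_iUnion, exists_prop]
        exact ⟨i, Finset.mem_image_of_mem _ hit, hyi⟩
      · simp only [mem_iInter]
        intro n hn
        obtain ⟨i, -, rfl⟩ := Finset.mem_image.1 hn
        exact i.2
    · rintro ⟨S, hScov, hxS⟩ y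
      have : y ∈ ⋃ n ∈ S, V n := hScov ▸ mem_univ y
      obtain ⟨n, hnS, hyn⟩ := by simpa only [mem_iUnion, exists_prop] using this
      have hxT' : x ∈ T' n := by
        simp only [mem_iInter] at hxS
        exact hxS n hnS
      exact hWrect ▸ mem_iUnion.2 ⟨n, hxT', hyn⟩
  have hfullm : MeasurableSet {x : Cant | ∀ y, (x, y) ∈ W} := by
    rw [hfull]
    refine MeasurableSet.iUnion fun S => MeasurableSet.iUnion fun _ => ?_
    exact S.measurableSet_biInter fun n _ => hT'm n
  have : {x : Cant | ∃ y, (x, y) ∈ B} = {x : Cant | ∀ y, (x, y) ∈ W}ᶜ := by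
    ext x
    simp only [mem_setOf_eq, mem_compl_iff, not_forall, hW, mem_compl_iff, not_not]
  rw [this]
  exact hfullm.compl

end Cantor

section Coloring

theorem cantor_coloring (G : Set (Cant × Cant)) (hG : MeasurableSet G)
    (hirr : ∀ x : Cant, (x, x) ∉ G)
    (hlf : ∀ x : Cant, {y | (x, y) ∈ G}.Finite) :
    ∃ c : Cant → ℕ, Measurable c ∧ ∀ x y : Cant, (x, y) ∈ G → c x ≠ c y := by
  classical
  obtain ⟨b, hbc, -, hb⟩ := TopologicalSpace.exists_countable_basis Cant
  obtain ⟨V, hV⟩ : ∃ V : ℕ → Set Cant, insert ∅ b = range V :=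
    (hbc.insert ∅).exists_eq_range (insert_nonempty _ _)
  have hVmem : ∀ n, V n ∈ insert ∅ b := fun n => hV ▸ mem_range_self n
  have hVopen : ∀ n, IsOpen (V n) := by
    intro n
    rcases hVmem n with h | h
    · rw [h]; exact isOpen_empty
    · exact hb.isOpen h
  have hVb : ∀ s ∈ b, ∃ n, V n = s := by
    intro s hs
    have : s ∈ range V := hV ▸ mem_insert_of_mem _ hs
    exact this.imp fun n hn => hn
  set S : ℕ → Set Cant := fun n => {x | ∃ y, (x, y) ∈ G ∩ univ ×ˢ V n} with hS
  have hSm : ∀ n, MeasurableSet (S n) := by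
    intro n
    apply proj_measurable (hG.inter (MeasurableSet.univ.prod (hVopen n).measurableSet))
    intro x
    exact (hlf x).subset fun y hy => hy.1
  set P : ℕ → Set Cant := fun n => V n ∩ (S n)ᶜ with hP
  have hPm : ∀ n, MeasurableSet (P n) := fun n => (hVopen n).measurableSet.inter (hSm n).compl
  have hex : ∀ x, ∃ n, x ∈ P n := by
    intro x
    have hNc : IsClosed {y | (x, y) ∈ G} := (hlf x).isClosed
    have hxU : x ∈ {y | (x, y) ∈ G}ᶜ := fun h => hirr x h
    obtain ⟨v, hvb, hxv, hvsub⟩ := hb.exists_subset_of_mem_open hxU hNc.isOpen_compl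
    obtain ⟨n, rfl⟩ := hVb v hvb
    refine ⟨n, hxv, ?_⟩
    rintro ⟨y, hyG, -, hyV⟩
    exact (hvsub hyV) hyG
  refine ⟨fun x => Nat.find (hex x), ?_, ?_⟩
  · have hpre : ∀ k, (fun x => Nat.find (hex x)) ⁻¹' {k} = P k ∩ ⋂ (j : ℕ) (_ : j < k), (P j)ᶜ := by
      intro k
      ext x
      simp only [mem_preimage, mem_singleton_iff, Nat.find_eq_iff, mem_inter_iff, mem_iInter,
        mem_compl_iff]
    apply measurable_to_nat
    intro y
    rw [hpre]
    exact (hPm _).inter (MeasurableSet.iInter fun j => MeasurableSet.iInter fun _ => (hPm j).compl)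
  · intro x y hxy heq
    have hx : x ∈ P (Nat.find (hex x)) := Nat.find_spec (hex x)
    have hy : y ∈ P (Nat.find (hex y)) := Nat.find_spec (hex y)
    have heq' : Nat.find (hex x) = Nat.find (hex y) := heq
    rw [← heq'] at hy
    exact hx.2 ⟨y, ⟨hxy, trivial, hy.1⟩⟩

end Coloring

/-- **Kechris–Solecki–Todorcevic.** Every locally finite Borel graph (an irreflexive
symmetric Borel subset of `X × X`) on a standard Borel space has a Borel ℕ-coloring. -/
theorem stmt2 {X : Type*} [MeasurableSpace X] [StandardBorelSpace X]
    (G : Set (X × X)) (hG : MeasurableSet G)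
    (hirr : ∀ x : X, (x, x) ∉ G)
    (hsym : ∀ x y : X, (x, y) ∈ G → (y, x) ∈ G)
    (hlf : ∀ x : X, {y | (x, y) ∈ G}.Finite) :
    ∃ c : X → ℕ, Measurable c ∧ ∀ x y : X, (x, y) ∈ G → c x ≠ c y := by
  by_cases hcnt : Countable X
  · obtain ⟨f, hf⟩ := (countable_iff_exists_injective X).1 hcnt
    letI := upgradeStandardBorel X
    refine ⟨f, ?_, ?_⟩
    · apply measurable_to_nat
      intro y
      exact (Set.to_countable _).measurableSet
    · intro x y hxy heq
      exact hirr x ((hf heq) ▸ hxy)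
  · let e := PolishSpace.measurableEquivNatBoolOfNotCountable (α := X) hcnt
    let G' : Set (Cant × Cant) := (fun p : Cant × Cant => (e.symm p.1, e.symm p.2)) ⁻¹' G
    have hG' : MeasurableSet G' :=
      ((e.symm.measurable.comp measurable_fst).prodMk
        (e.symm.measurable.comp measurable_snd)) hG
    have hirr' : ∀ a : Cant, (a, a) ∉ G' := fun a => hirr _
    have hlf' : ∀ a : Cant, {b | (a, b) ∈ G'}.Finite := by
      intro a
      have heq : {b | (a, b) ∈ G'} = e.symm ⁻¹' {y | (e.symm a, y) ∈ G} := rfl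
      rw [heq]
      exact (hlf _).preimage (e.symm.injective.injOn)
    obtain ⟨c', hc'm, hc'p⟩ := cantor_coloring G' hG' hirr' hlf'
    refine ⟨c' ∘ e, hc'm.comp e.measurable, ?_⟩
    intro x y hxy
    apply hc'p (e x) (e y)
    show (e.symm (e x), e.symm (e y)) ∈ G
    rw [e.symm_apply_apply, e.symm_apply_apply]
    exact hxy
end

section
/- If a Borel graph on a standard Borel space X has all vertex degrees bounded by d ∈ ℕ, then it has a Borel (d+1)-coloring, i.e., a Borel function c : X → {1, …, d+1} giving adjacent points distinct colors. -/
open MeasureTheory Set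

/-- Auxiliary step for the finite-section Lusin–Novikov argument: the set of points whose
`G`-section meets `A` in at least `k` points is Borel, assuming it is known for `k + 1`.
The proof uses the uniqueness of increasing enumerations together with the Lusin–Souslin
theorem on injective Borel images. -/
theorem kst_step {X : Type*} [MeasurableSpace X] [StandardBorelSpace X]
    (e : X → ℝ) (he : MeasurableEmbedding e)
    (G : Set (X × X)) (hG : MeasurableSet G)
    (hfin : ∀ x : X, {y | (x, y) ∈ G}.Finite)
    (A : Set X) (hA : MeasurableSet A)
    (k : ℕ)
    (hSk1 : MeasurableSet {x | k + 1 ≤ ({y | (x, y) ∈ G} ∩ A).ncard}) :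
    MeasurableSet {x | k ≤ ({y | (x, y) ∈ G} ∩ A).ncard} := by
  classical
  set S1 : Set X := {x | k + 1 ≤ ({y | (x, y) ∈ G} ∩ A).ncard} with hS1def
  set T : Set (X × (Fin k → X)) :=
    {p | (∀ i, (p.1, p.2 i) ∈ G ∧ p.2 i ∈ A) ∧
      (∀ i j : Fin k, i < j → e (p.2 i) < e (p.2 j)) ∧ p.1 ∉ S1} with hTdef
  have h1 : MeasurableSet {p : X × (Fin k → X) | ∀ i, (p.1, p.2 i) ∈ G ∧ p.2 i ∈ A} := by
    rw [setOf_forall]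
    refine MeasurableSet.iInter fun i => ?_
    have m1 : Measurable fun p : X × (Fin k → X) => (p.1, p.2 i) :=
      measurable_fst.prodMk ((measurable_pi_apply i).comp measurable_snd)
    have m2 : Measurable fun p : X × (Fin k → X) => p.2 i :=
      (measurable_pi_apply i).comp measurable_snd
    exact (m1 hG).inter (m2 hA)
  have h2 : MeasurableSet {p : X × (Fin k → X) | ∀ i j : Fin k, i < j → e (p.2 i) < e (p.2 j)} := by
    rw [setOf_forall]
    refine MeasurableSet.iInter fun i => ?_
    rw [setOf_forall]
    refine MeasurableSet.iInter fun j => ?_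
    by_cases hij : i < j
    · simp only [hij, true_implies]
      exact measurableSet_lt (he.measurable.comp ((measurable_pi_apply i).comp measurable_snd))
        (he.measurable.comp ((measurable_pi_apply j).comp measurable_snd))
    · simp only [hij, false_implies]
      exact MeasurableSet.univ
  have h3 : MeasurableSet {p : X × (Fin k → X) | p.1 ∉ S1} := measurable_fst hSk1.compl
  have hT : MeasurableSet T := h1.inter (h2.inter h3)
  have hinj : InjOn Prod.fst T := by
    rintro ⟨x, v⟩ hv ⟨x', w⟩ hw (rfl : x = x')
    obtain ⟨hv1, hv2, hv3⟩ := hv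
    obtain ⟨hw1, hw2, hw3⟩ := hw
    simp only at hv1 hv2 hv3 hw1 hw2 hw3
    set F : Set X := {y | (x, y) ∈ G} ∩ A with hFdef
    have hF : F.Finite := (hfin x).inter_of_left A
    have hvmono : StrictMono (fun i => e (v i)) := fun i j hij => hv2 i j hij
    have hwmono : StrictMono (fun i => e (w i)) := fun i j hij => hw2 i j hij
    have hvF : ∀ i, v i ∈ F := fun i => ⟨(hv1 i).1, (hv1 i).2⟩
    have hwF : ∀ i, w i ∈ F := fun i => ⟨(hw1 i).1, (hw1 i).2⟩
    have hvinj : Function.Injective v := fun i j hij =>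
      hvmono.injective (congrArg e hij)
    have hcard : k ≤ F.ncard := by
      calc k = (range v).ncard := by
              rw [← image_univ, Set.ncard_image_of_injective _ hvinj, Set.ncard_univ,
                Nat.card_eq_fintype_card, Fintype.card_fin]
           _ ≤ F.ncard := Set.ncard_le_ncard (range_subset_iff.2 hvF) hF
    have hle : F.ncard ≤ k := by
      have h := hv3; simp only [hS1def, mem_setOf_eq, not_le] at h
      exact Nat.lt_succ_iff.mp h
    have hcard' : F.ncard = k := le_antisymm hle hcard
    set s : Finset ℝ := (hF.image e).toFinset with hsdef
    have hscard : s.card = k := by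
      rw [hsdef, ← Set.ncard_eq_toFinset_card _ (hF.image e),
        Set.ncard_image_of_injective _ he.injective, hcard']
    have hv4 : (fun i => e (v i)) = s.orderEmbOfFin hscard := by
      refine Finset.orderEmbOfFin_unique hscard (fun i => ?_) hvmono
      simp only [hsdef, Set.Finite.mem_toFinset]
      exact ⟨v i, hvF i, rfl⟩
    have hw4 : (fun i => e (w i)) = s.orderEmbOfFin hscard := by
      refine Finset.orderEmbOfFin_unique hscard (fun i => ?_) hwmono
      simp only [hsdef, Set.Finite.mem_toFinset]
      exact ⟨w i, hwF i, rfl⟩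
    have hvw : v = w := by
      funext i
      apply he.injective
      exact congrFun (hv4.trans hw4.symm) i
    simp [hvw]
  have himg : Prod.fst '' T = {x | k ≤ ({y | (x, y) ∈ G} ∩ A).ncard} \ S1 := by
    ext x
    constructor
    · rintro ⟨⟨x', v⟩, hvT, rfl⟩
      obtain ⟨hv1, hv2, hv3⟩ := hvT
      simp only at hv1 hv2 hv3 ⊢
      have hvmono : StrictMono (fun i => e (v i)) := fun i j hij => hv2 i j hij
      have hvinj : Function.Injective v := fun i j hij =>
        hvmono.injective (congrArg e hij)
      have hF : ({y | (x', y) ∈ G} ∩ A).Finite := (hfin x').inter_of_left A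
      have hsub : range v ⊆ {y | (x', y) ∈ G} ∩ A :=
        range_subset_iff.2 fun i => ⟨(hv1 i).1, (hv1 i).2⟩
      refine ⟨?_, hv3⟩
      calc k = (range v).ncard := by
              rw [← image_univ, Set.ncard_image_of_injective _ hvinj, Set.ncard_univ,
                Nat.card_eq_fintype_card, Fintype.card_fin]
           _ ≤ _ := Set.ncard_le_ncard hsub hF
    · rintro ⟨hx1, hx2⟩
      set F : Set X := {y | (x, y) ∈ G} ∩ A with hFdef
      have hF : F.Finite := (hfin x).inter_of_left A
      have hle : F.ncard ≤ k := by
        have h := hx2; simp only [hS1def, mem_setOf_eq, not_le] at h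
        exact Nat.lt_succ_iff.mp h
      have hcard : F.ncard = k := le_antisymm hle hx1
      set s : Finset ℝ := (hF.image e).toFinset with hsdef
      have hscard : s.card = k := by
        rw [hsdef, ← Set.ncard_eq_toFinset_card _ (hF.image e),
          Set.ncard_image_of_injective _ he.injective, hcard]
      have hex : ∀ i : Fin k, ∃ y, y ∈ F ∧ e y = s.orderEmbOfFin hscard i := by
        intro i
        have hmem : (s.orderEmbOfFin hscard i : ℝ) ∈ s := Finset.orderEmbOfFin_mem s hscard i
        simp only [hsdef, Set.Finite.mem_toFinset] at hmem
        obtain ⟨y, hy, hy2⟩ := hmem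
        exact ⟨y, hy, hy2⟩
      choose v hvF hve using hex
      refine ⟨⟨x, v⟩, ⟨fun i => ⟨(hvF i).1, (hvF i).2⟩, fun i j hij => ?_, hx2⟩, rfl⟩
      rw [hve i, hve j]
      exact (s.orderEmbOfFin hscard).strictMono hij
  have hmbl : MeasurableSet (Prod.fst '' T) :=
    hT.image_of_measurable_injOn measurable_fst hinj
  rw [himg] at hmbl
  have hu : MeasurableSet (({x | k ≤ ({y | (x, y) ∈ G} ∩ A).ncard} \ S1) ∪ S1) :=
    hmbl.union hSk1
  convert hu using 1
  ext x
  simp only [mem_union, mem_diff, mem_setOf_eq, hS1def]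
  constructor
  · intro h; by_cases h1 : k + 1 ≤ ({y | (x, y) ∈ G} ∩ A).ncard
    · exact Or.inr h1
    · exact Or.inl ⟨h, h1⟩
  · rintro (⟨h, _⟩ | h)
    · exact h
    · omega

/-- Borel-ness of neighborhoods of Borel sets for bounded degree Borel graphs
(a consequence of the Lusin–Novikov theorem for finite sections). -/
theorem kst_nbr {X : Type*} [MeasurableSpace X] [StandardBorelSpace X]
    (e : X → ℝ) (he : MeasurableEmbedding e)
    (G : Set (X × X)) (hG : MeasurableSet G) (d : ℕ)
    (hfin : ∀ x : X, {y | (x, y) ∈ G}.Finite)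
    (hdeg : ∀ x : X, {y | (x, y) ∈ G}.ncard ≤ d)
    (A : Set X) (hA : MeasurableSet A) :
    MeasurableSet {x | ∃ y ∈ A, (x, y) ∈ G} := by
  have key : ∀ i : ℕ, MeasurableSet {x | d + 1 - i ≤ ({y | (x, y) ∈ G} ∩ A).ncard} := by
    intro i
    induction i with
    | zero =>
      have h0 : {x | d + 1 - 0 ≤ ({y | (x, y) ∈ G} ∩ A).ncard} = ∅ := by
        ext x
        simp only [mem_setOf_eq, mem_empty_iff_false, iff_false, not_le, Nat.sub_zero]
        have h1 : ({y | (x, y) ∈ G} ∩ A).ncard ≤ {y | (x, y) ∈ G}.ncard :=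
          Set.ncard_le_ncard inter_subset_left (hfin x)
        have := hdeg x; omega
      rw [h0]; exact MeasurableSet.empty
    | succ i ih =>
      by_cases hi : i ≤ d
      · have heq : d + 1 - i = (d + 1 - (i + 1)) + 1 := by omega
        rw [heq] at ih
        exact kst_step e he G hG hfin A hA _ ih
      · have h0 : d + 1 - (i + 1) = 0 := by omega
        rw [h0]
        have h1 : {x : X | 0 ≤ ({y | (x, y) ∈ G} ∩ A).ncard} = univ := by
          ext x; simp
        rw [h1]; exact MeasurableSet.univ
  have h1 := key d
  have heq : {x | ∃ y ∈ A, (x, y) ∈ G}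
      = {x | d + 1 - d ≤ ({y | (x, y) ∈ G} ∩ A).ncard} := by
    ext x
    have hd : d + 1 - d = 1 := by omega
    rw [hd]
    simp only [mem_setOf_eq]
    have hiff : (1 : ℕ) ≤ ({y | (x, y) ∈ G} ∩ A).ncard ↔ ({y | (x, y) ∈ G} ∩ A).Nonempty :=
      Set.ncard_pos ((hfin x).inter_of_left A)
    rw [hiff]
    constructor
    · rintro ⟨y, hyA, hyG⟩; exact ⟨y, hyG, hyA⟩
    · rintro ⟨y, hyG, hyA⟩; exact ⟨y, hyA, hyG⟩
  rw [heq]; exact h1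

/-- Choice of the least color satisfying a predicate (default `0`). -/
noncomputable def kstPick {d : ℕ} (P : Fin (d + 1) → Prop) : Fin (d + 1) :=
  letI := Classical.decPred P
  if h : ∃ i, P i then Fin.find P h else ⟨0, Nat.succ_pos d⟩

theorem kstPick_eq_iff {d : ℕ} {P : Fin (d + 1) → Prop} (h : ∃ i, P i) {i : Fin (d + 1)} :
    kstPick P = i ↔ P i ∧ ∀ j, P j → i ≤ j := by
  classical
  unfold kstPick
  rw [dif_pos h]
  constructor
  · rintro rfl
    exact ⟨Fin.find_spec h, fun j hj => Fin.find_le_of_pos h hj⟩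
  · intro hi
    exact le_antisymm (Fin.find_le_of_pos h hi.1) (hi.2 _ (Fin.find_spec h))

theorem kstPick_spec {d : ℕ} {P : Fin (d + 1) → Prop} (h : ∃ i, P i) : P (kstPick P) :=
  ((kstPick_eq_iff h).1 rfl).1

/-- The greedy recoloring: a vertex of `c₀`-color `n` gets the least color in `Fin (d+1)` not
used by its neighbors of smaller `c₀`-color. -/
noncomputable def kstGreedy {X : Type*} (G : Set (X × X)) (c₀ : X → ℕ) (d : ℕ) :
    ℕ → X → Fin (d + 1)
  | n => fun x => kstPick (fun i =>
      ∀ y, (x, y) ∈ G → ∀ m, m < n → c₀ y = m → kstGreedy G c₀ d m y ≠ i)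
  termination_by n => n

theorem kstGreedy_eq {X : Type*} (G : Set (X × X)) (c₀ : X → ℕ) (d : ℕ) (n : ℕ) (x : X) :
    kstGreedy G c₀ d n x = kstPick (fun i =>
      ∀ y, (x, y) ∈ G → ∀ m, m < n → c₀ y = m → kstGreedy G c₀ d m y ≠ i) := by
  rw [kstGreedy]

/-- **Kechris–Solecki–Todorcevic.** Every Borel graph (an irreflexive symmetric Borel subset
of `X × X`) on a standard Borel space with all degrees bounded by `d` has a Borel
`(d+1)`-coloring. -/
theorem stmt3 {X : Type*} [MeasurableSpace X] [StandardBorelSpace X]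
    (G : Set (X × X)) (hG : MeasurableSet G)
    (hirr : ∀ x : X, (x, x) ∉ G)
    (hsym : ∀ x y : X, (x, y) ∈ G → (y, x) ∈ G)
    (d : ℕ)
    (hfin : ∀ x : X, {y | (x, y) ∈ G}.Finite)
    (hdeg : ∀ x : X, {y | (x, y) ∈ G}.ncard ≤ d) :
    ∃ c : X → Fin (d + 1), Measurable c ∧ ∀ x y : X, (x, y) ∈ G → c x ≠ c y := by
  classical
  obtain ⟨e, he⟩ := exists_measurableEmbedding_real X
  -- the countable family of "rational interval" sets
  obtain ⟨φ, hφ⟩ := exists_surjective_nat (ℚ × ℚ)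
  set U : ℕ → Set X := fun n =>
    {z | (((φ n).1 : ℚ) : ℝ) < e z ∧ e z < (((φ n).2 : ℚ) : ℝ)} with hUdef
  have hU : ∀ n, MeasurableSet (U n) := fun n =>
    (measurableSet_lt measurable_const he.measurable).inter
      (measurableSet_lt he.measurable measurable_const)
  -- neighborhoods of Borel sets are Borel
  have hnbr : ∀ A : Set X, MeasurableSet A → MeasurableSet {x | ∃ y ∈ A, (x, y) ∈ G} :=
    fun A hA => kst_nbr e he G hG d hfin hdeg A hA
  -- each point has a separating basic set containing none of its neighbors
  have hex : ∀ x : X, ∃ n : ℕ, x ∈ U n ∧ ∀ y, (x, y) ∈ G → y ∉ U n := by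
    intro x
    set F : Set ℝ := e '' {y | (x, y) ∈ G} with hFdef
    have hFfin : F.Finite := (hfin x).image e
    have haF : e x ∉ F := by
      rintro ⟨y, hy, hey⟩
      have : y = x := he.injective hey
      exact hirr x (this ▸ hy)
    -- rational lower bound
    obtain ⟨q, hq1, hq2⟩ : ∃ q : ℚ, (q : ℝ) < e x ∧ ∀ b ∈ F, b < e x → b ≤ (q : ℝ) := by
      have hLfin : (F ∩ Iio (e x)).Finite := hFfin.inter_of_left _
      by_cases hne : (hLfin.toFinset).Nonempty
      · set m := hLfin.toFinset.max' hne with hmdef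
        have hmF : m ∈ F ∩ Iio (e x) := by
          have := hLfin.toFinset.max'_mem hne
          rwa [Set.Finite.mem_toFinset] at this
        obtain ⟨q, hq⟩ := exists_rat_btwn (show m < e x from hmF.2)
        refine ⟨q, hq.2, fun b hb hblt => ?_⟩
        have hbm : b ≤ m := hLfin.toFinset.le_max' b (by
          rw [Set.Finite.mem_toFinset]; exact ⟨hb, hblt⟩)
        exact hbm.trans hq.1.le
      · obtain ⟨q, hq⟩ := exists_rat_btwn (show e x - 1 < e x by linarith)
        refine ⟨q, hq.2, fun b hb hblt => absurd ?_ hne⟩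
        exact ⟨b, by rw [Set.Finite.mem_toFinset]; exact ⟨hb, hblt⟩⟩
    -- rational upper bound
    obtain ⟨r, hr1, hr2⟩ : ∃ r : ℚ, e x < (r : ℝ) ∧ ∀ b ∈ F, e x < b → (r : ℝ) ≤ b := by
      have hLfin : (F ∩ Ioi (e x)).Finite := hFfin.inter_of_left _
      by_cases hne : (hLfin.toFinset).Nonempty
      · set m := hLfin.toFinset.min' hne with hmdef
        have hmF : m ∈ F ∩ Ioi (e x) := by
          have := hLfin.toFinset.min'_mem hne
          rwa [Set.Finite.mem_toFinset] at this
        obtain ⟨r, hr⟩ := exists_rat_btwn (show e x < m from hmF.2)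
        refine ⟨r, hr.1, fun b hb hblt => ?_⟩
        have hbm : m ≤ b := hLfin.toFinset.min'_le b (by
          rw [Set.Finite.mem_toFinset]; exact ⟨hb, hblt⟩)
        exact hr.2.le.trans hbm
      · obtain ⟨r, hr⟩ := exists_rat_btwn (lt_add_one (e x))
        refine ⟨r, hr.1, fun b hb hblt => absurd ?_ hne⟩
        exact ⟨b, by rw [Set.Finite.mem_toFinset]; exact ⟨hb, hblt⟩⟩
    obtain ⟨n, hn⟩ := hφ (q, r)
    refine ⟨n, ?_, ?_⟩
    · simp only [hUdef, mem_setOf_eq, hn]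
      exact ⟨hq1, hr1⟩
    · intro y hy hyU
      simp only [hUdef, mem_setOf_eq, hn] at hyU
      have hyF : e y ∈ F := ⟨y, hy, rfl⟩
      have hyx : e y ≠ e x := fun h => by
        have : y = x := he.injective h
        exact hirr x (this ▸ hy)
      rcases lt_or_gt_of_ne hyx with h | h
      · exact absurd hyU.1 (not_lt.2 (hq2 _ hyF h))
      · exact absurd hyU.2 (not_lt.2 (hr2 _ hyF h))
  -- the countable Borel coloring
  set c₀ : X → ℕ := fun x => Nat.find (hex x) with hc₀def
  set N : ℕ → Set X := fun n => {x | ∃ y ∈ U n, (x, y) ∈ G} with hNdef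
  have hN : ∀ n, MeasurableSet (N n) := fun n => hnbr (U n) (hU n)
  set D : ℕ → Set X := fun n => U n ∩ (N n)ᶜ with hDdef
  have hD : ∀ n, MeasurableSet (D n) := fun n => (hU n).inter (hN n).compl
  have hmemD : ∀ n x, x ∈ D n ↔ (x ∈ U n ∧ ∀ y, (x, y) ∈ G → y ∉ U n) := by
    intro n x
    simp only [hDdef, hNdef, mem_inter_iff, mem_compl_iff, mem_setOf_eq]
    constructor
    · rintro ⟨h1, h2⟩
      exact ⟨h1, fun y hy hyU => h2 ⟨y, hyU, hy⟩⟩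
    · rintro ⟨h1, h2⟩
      exact ⟨h1, fun ⟨y, hyU, hy⟩ => h2 y hy hyU⟩
  have hc₀m : Measurable c₀ := by
    refine measurable_to_countable' fun n => ?_
    have : c₀ ⁻¹' {n} = D n ∩ ⋂ (m) (_ : m < n), (D m)ᶜ := by
      ext x
      have hfind : c₀ x = n ↔ (x ∈ U n ∧ ∀ y, (x, y) ∈ G → y ∉ U n) ∧
          ∀ m, m < n → ¬(x ∈ U m ∧ ∀ y, (x, y) ∈ G → y ∉ U m) :=
        Nat.find_eq_iff (hex x)
      simp only [mem_preimage, mem_singleton_iff, hfind,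
        mem_inter_iff, mem_iInter, mem_compl_iff, hmemD]
      try tauto
    rw [this]
    exact (hD n).inter (MeasurableSet.iInter fun m =>
      MeasurableSet.iInter fun _ => (hD m).compl)
  have hc₀col : ∀ x y, (x, y) ∈ G → c₀ x ≠ c₀ y := by
    intro x y hxy h
    have hx : x ∈ U (c₀ x) ∧ ∀ y, (x, y) ∈ G → y ∉ U (c₀ x) := Nat.find_spec (hex x)
    have hy : y ∈ U (c₀ y) ∧ ∀ z, (y, z) ∈ G → z ∉ U (c₀ y) := Nat.find_spec (hex y)
    rw [h] at hx
    exact hx.2 y hxy hy.1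
  -- existence of available colors for the greedy procedure
  set g : ℕ → X → Fin (d + 1) := kstGreedy G c₀ d with hgdef
  have hexg : ∀ n x, ∃ i : Fin (d + 1),
      ∀ y, (x, y) ∈ G → ∀ m, m < n → c₀ y = m → g m y ≠ i := by
    intro n x
    set B : Set (Fin (d + 1)) := (fun y => g (c₀ y) y) '' {y | (x, y) ∈ G} with hBdef
    have hBcard : B.ncard ≤ d := le_trans (Set.ncard_image_le (hfin x)) (hdeg x)
    have : ∃ i, i ∉ B := by
      by_contra hcon
      push_neg at hcon
      have : B = univ := eq_univ_of_forall hcon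
      rw [this, Set.ncard_univ, Nat.card_eq_fintype_card, Fintype.card_fin] at hBcard
      omega
    obtain ⟨i, hi⟩ := this
    refine ⟨i, fun y hy m hmn hcm hgi => hi ?_⟩
    exact ⟨y, hy, show g (c₀ y) y = i by rw [hcm]; exact hgi⟩
  -- measurability of each stage of the greedy coloring
  have hgm : ∀ n, Measurable (g n) := by
    intro n
    induction n using Nat.strong_induction_on with
    | _ n ih =>
      refine measurable_to_countable' fun i => ?_
      have hPm : ∀ i : Fin (d + 1), MeasurableSet
          {x | ∀ y, (x, y) ∈ G → ∀ m, m < n → c₀ y = m → g m y ≠ i} := by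
        intro i
        have heq : {x | ∀ y, (x, y) ∈ G → ∀ m, m < n → c₀ y = m → g m y ≠ i}
            = ⋂ (m) (_ : m < n), {x | ∃ y ∈ {y | c₀ y = m ∧ g m y = i}, (x, y) ∈ G}ᶜ := by
          ext x
          simp only [mem_setOf_eq, mem_iInter, mem_compl_iff]
          constructor
          · rintro h m hmn ⟨y, ⟨hc, hg⟩, hy⟩
            exact h y hy m hmn hc hg
          · intro h y hy m hmn hc hg
            exact h m hmn ⟨y, ⟨hc, hg⟩, hy⟩
        rw [heq]
        refine MeasurableSet.iInter fun m => MeasurableSet.iInter fun hmn => ?_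
        refine (hnbr _ ?_).compl
        exact (hc₀m (measurableSet_singleton m)).inter ((ih m hmn) (measurableSet_singleton i))
      have : g n ⁻¹' {i} = {x | ∀ y, (x, y) ∈ G → ∀ m, m < n → c₀ y = m → g m y ≠ i}
          ∩ ⋂ j : Fin (d + 1),
            {x | (∀ y, (x, y) ∈ G → ∀ m, m < n → c₀ y = m → g m y ≠ j) → i ≤ j} := by
        ext x
        simp only [mem_preimage, mem_singleton_iff, mem_inter_iff, mem_iInter, mem_setOf_eq]
        rw [hgdef, kstGreedy_eq, kstPick_eq_iff (hexg n x)]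
      rw [this]
      refine (hPm i).inter (MeasurableSet.iInter fun j => ?_)
      by_cases hij : i ≤ j
      · have : {x : X | (∀ y, (x, y) ∈ G → ∀ m, m < n → c₀ y = m → g m y ≠ j) → i ≤ j}
            = univ := by ext x; simp [hij]
        rw [this]; exact MeasurableSet.univ
      · have : {x : X | (∀ y, (x, y) ∈ G → ∀ m, m < n → c₀ y = m → g m y ≠ j) → i ≤ j}
            = {x | ∀ y, (x, y) ∈ G → ∀ m, m < n → c₀ y = m → g m y ≠ j}ᶜ := by
          ext x; simp [hij]
        rw [this]; exact (hPm j).compl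
  -- the final coloring
  refine ⟨fun x => g (c₀ x) x, ?_, ?_⟩
  · refine measurable_to_countable' fun i => ?_
    have : (fun x => g (c₀ x) x) ⁻¹' {i} = ⋃ n, c₀ ⁻¹' {n} ∩ g n ⁻¹' {i} := by
      ext x
      simp only [mem_preimage, mem_singleton_iff, mem_iUnion, mem_inter_iff]
      constructor
      · intro h; exact ⟨c₀ x, rfl, h⟩
      · rintro ⟨n, rfl, h⟩; exact h
    rw [this]
    exact MeasurableSet.iUnion fun n =>
      (hc₀m (measurableSet_singleton n)).inter ((hgm n) (measurableSet_singleton i))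
  · have key : ∀ x y, (x, y) ∈ G → c₀ y < c₀ x → g (c₀ x) x ≠ g (c₀ y) y := by
      intro x y hxy hlt
      have hspec := kstPick_spec (hexg (c₀ x) x)
      have := hspec y hxy (c₀ y) hlt rfl
      rw [hgdef, kstGreedy_eq]
      exact fun h => this (h ▸ rfl)
    intro x y hxy
    rcases lt_or_gt_of_ne (hc₀col x y hxy) with h | h
    · exact (key y x (hsym x y hxy) h).symm
    · exact key x y hxy h
end

section
/- Let G be a countable amenable group acting freely on a set X. Let K, W ⊆ G be finite, let ε, δ > 0, let C ⊆ X, and for each c ∈ C let F_c ⊆ W be a (K, δ(1−ε))-invariant finite set. If the collection {F_c c : c ∈ C} is ε-disjoint and A = ⋃_{c∈C} F_c c has positive lower Banach density, then A is (K, δ)*-invariant. -/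
open Set
open scoped Pointwise symmDiff

/-- A nonempty finite set `F ⊆ G` is `(K,δ)`-invariant if `|KF △ F| < δ|F|`. -/
def IsInv {G : Type*} [Group G] (K F : Finset G) (δ : ℝ) : Prop :=
  F.Nonempty ∧ ((((K : Set G) * (F : Set G)) ∆ (F : Set G)).ncard : ℝ) < δ * F.card

/-- The lower Banach density of `A ⊆ X` with respect to a free action `G ↷ X`:
`lBD(A) = sup_F inf_x |A ∩ Fx| / |F|` over nonempty finite `F ⊆ G`. -/
noncomputable def lBD (G : Type*) [Group G] {X : Type*} [MulAction G X] (A : Set X) : ℝ :=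
  ⨆ (F : Finset G) (_ : F.Nonempty), ⨅ x : X,
    ((A ∩ (fun g : G => g • x) '' (F : Set G)).ncard : ℝ) / F.card

/-- `A ⊆ X` is `(K,δ)*`-invariant if there is a nonempty finite `F ⊆ G` with
`|(KA △ A) ∩ Fx| < δ|A ∩ Fx|` for all `x ∈ X`. -/
def StarInv {G : Type*} [Group G] {X : Type*} [MulAction G X]
    (K : Finset G) (δ : ℝ) (A : Set X) : Prop :=
  ∃ F : Finset G, F.Nonempty ∧ ∀ x : X,
    (((((K : Set G) • A) ∆ A) ∩ (fun g : G => g • x) '' (F : Set G)).ncard : ℝ)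
      < δ * ((A ∩ (fun g : G => g • x) '' (F : Set G)).ncard : ℝ)

/-- The collection `{F_c c : c ∈ C}` is `ε`-disjoint: for each `c ∈ C` there is
`F'_c ⊆ F_c` with `|F'_c| > (1-ε)|F_c|` such that the sets `F'_c c`, `c ∈ C`, are pairwise
disjoint. -/
def EpsDisjoint {G : Type*} [Group G] {X : Type*} [MulAction G X]
    (ε : ℝ) (C : Set X) (F : X → Finset G) : Prop :=
  ∃ F' : X → Finset G,
    (∀ c ∈ C, F' c ⊆ F c ∧ (1 - ε) * ((F c).card : ℝ) < ((F' c).card : ℝ)) ∧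
    ∀ c ∈ C, ∀ c' ∈ C, c ≠ c' →
      Disjoint ((fun g : G => g • c) '' ((F' c : Set G)))
        ((fun g : G => g • c') '' ((F' c' : Set G)))

set_option maxHeartbeats 3200000 in
/-- An `ε`-disjoint union of `(K, δ(1-ε))`-invariant translated tiles `F_c c ⊆ Wc` with
positive lower Banach density is `(K,δ)*`-invariant. -/
theorem stmt6 {G : Type*} [Group G] [Countable G] {X : Type*} [MulAction G X]
    (hfree : ∀ g : G, g ≠ 1 → ∀ x : X, g • x ≠ x)
    (hAm : ∀ (K : Finset G) (δ : ℝ), 0 < δ → ∃ F : Finset G, IsInv K F δ)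
    (K W : Finset G) (ε δ : ℝ) (hε : 0 < ε) (hδ : 0 < δ)
    (C : Set X) (F : X → Finset G)
    (hFW : ∀ c ∈ C, F c ⊆ W)
    (hFinv : ∀ c ∈ C, IsInv K (F c) (δ * (1 - ε)))
    (hdisj : EpsDisjoint ε C F)
    (hpos : 0 < lBD G (⋃ c ∈ C, (fun g : G => g • c) '' ((F c : Set G)))) :
    StarInv K δ (⋃ c ∈ C, (fun g : G => g • c) '' ((F c : Set G))) := by
  classical
  obtain ⟨F', hF'1, hF'2⟩ := hdisj
  set A : Set X := ⋃ c ∈ C, (fun g : G => g • c) '' ((F c : Set G)) with hA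
  -- freeness gives injectivity of orbit maps
  have hinj : ∀ z : X, Function.Injective (fun g : G => g • z) := by
    intro z g h hgh
    have hgh' : g • z = h • z := hgh
    by_contra hne
    have h1 : (h⁻¹ * g) • z = z := by rw [mul_smul, hgh', inv_smul_smul]
    exact hfree (h⁻¹ * g) (fun h2 => hne (inv_mul_eq_one.mp h2).symm) z h1
  -- translate set intersections into finsets
  have key : ∀ (S : Set X) (P : Finset G) (z : X),
      S ∩ (fun g : G => g • z) '' (P : Set G) =
        ↑((P.image (fun g => g • z)).filter (· ∈ S)) := by
    intro S P z
    ext y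
    simp only [Set.mem_inter_iff, Set.mem_image, Finset.coe_filter, Set.mem_setOf_eq,
      Finset.mem_image, Finset.mem_coe]
    tauto
  -- extract a translate set witnessing positive lower Banach density
  obtain ⟨F₀, hF₀ne, hα⟩ : ∃ F₀ : Finset G, F₀.Nonempty ∧
      0 < ⨅ x : X, ((A ∩ (fun g : G => g • x) '' (F₀ : Set G)).ncard : ℝ) / F₀.card := by
    by_contra hcon
    push_neg at hcon
    have hle : lBD G A ≤ 0 := by
      apply Real.iSup_le _ le_rfl
      intro F1
      apply Real.iSup_le _ le_rfl
      intro h1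
      exact hcon F1 h1
    rw [lBD] at hle hpos
    linarith
  have hF₀pos : (0:ℝ) < F₀.card := by exact_mod_cast Finset.card_pos.mpr hF₀ne
  set α : ℝ := ⨅ x : X, ((A ∩ (fun g : G => g • x) '' (F₀ : Set G)).ncard : ℝ) / F₀.card
    with hαdef
  have hαz : ∀ z : X, α * F₀.card ≤ (((F₀.image (fun g => g • z)).filter (· ∈ A)).card : ℝ) := by
    intro z
    have h1 : α ≤ ((A ∩ (fun g : G => g • z) '' (F₀ : Set G)).ncard : ℝ) / F₀.card :=
      ciInf_le ⟨0, by rintro v ⟨z', rfl⟩; positivity⟩ z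
    rw [key A F₀ z, Set.ncard_coe_finset] at h1
    exact (le_div_iff₀ hF₀pos).mp h1
  clear_value α
  have hX : Nonempty X := by
    by_contra h
    rw [not_nonempty_iff] at h
    have hz : α = 0 := by rw [hαdef, iInf, Set.range_eq_empty, Real.sInf_empty]
    linarith
  obtain ⟨x₀⟩ := hX
  obtain ⟨c₀, hc₀⟩ : ∃ c, c ∈ C := by
    have h1 := hαz x₀
    have h2 : (0:ℝ) < ((F₀.image (fun g => g • x₀)).filter (· ∈ A)).card := by nlinarith
    have h3 : 0 < ((F₀.image (fun g => g • x₀)).filter (· ∈ A)).card := by exact_mod_cast h2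
    obtain ⟨y, hy⟩ := Finset.card_pos.mp h3
    have hyA : y ∈ A := (Finset.mem_filter.mp hy).2
    rw [hA] at hyA
    simp only [Set.mem_iUnion] at hyA
    obtain ⟨c, hc, -⟩ := hyA
    exact ⟨c, hc⟩
  have hε1 : ε < 1 := by
    by_contra hge
    push_neg at hge
    obtain ⟨hne, hlt⟩ := hFinv c₀ hc₀
    have h1 : (0:ℝ) ≤ ((((K : Set G) * (F c₀ : Set G)) ∆ (F c₀ : Set G)).ncard : ℝ) := by
      positivity
    have h2 : (0:ℝ) < (F c₀).card := by exact_mod_cast Finset.card_pos.mpr hne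
    have h3 : δ * (1 - ε) ≤ 0 := mul_nonpos_iff.mpr (Or.inl ⟨hδ.le, by linarith⟩)
    have h4 : δ * (1 - ε) * ((F c₀).card : ℝ) ≤ 0 :=
      mul_nonpos_iff.mpr (Or.inr ⟨h3, h2.le⟩)
    linarith
  have hWle : (F c₀).card ≤ W.card := Finset.card_le_card (hFW c₀ hc₀)
  have hWn : 0 < W.card := lt_of_lt_of_le (Finset.card_pos.mpr (hFinv c₀ hc₀).1) hWle
  have hWpos : (0:ℝ) < W.card := by exact_mod_cast hWn
  have hW1 : (1:ℝ) ≤ W.card := by exact_mod_cast hWn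
  -- uniform gap γ and ratio β for the ε-disjointness counting
  set TT : Finset ℝ := insert ((W.card : ℝ) - (1 - ε))
    ((((Finset.Icc 1 W.card) ×ˢ (Finset.Icc 0 W.card)).filter
      (fun p => (1 - ε) * (p.1 : ℝ) < (p.2 : ℝ))).image
      (fun p => (p.2 : ℝ) - (1 - ε) * (p.1 : ℝ))) with hTT
  have hTTne : TT.Nonempty := ⟨_, Finset.mem_insert_self _ _⟩
  set γ : ℝ := TT.min' hTTne with hγdef
  have hγpos : 0 < γ := by
    have hmem : γ ∈ TT := TT.min'_mem hTTne
    rw [hTT] at hmem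
    rcases Finset.mem_insert.mp hmem with h | h
    · rw [h]; linarith
    · obtain ⟨p, hp, hpe⟩ := Finset.mem_image.mp h
      have h2 := (Finset.mem_filter.mp hp).2
      rw [← hpe]; linarith
  have hγle : γ ≤ (W.card : ℝ) - (1 - ε) := Finset.min'_le _ _ (Finset.mem_insert_self _ _)
  clear_value γ
  have hγW : γ < (W.card : ℝ) := by linarith
  set β : ℝ := 1 - γ / W.card with hβdef
  have hβpos : 0 < β := by
    have h1 : γ / W.card < 1 := (div_lt_one hWpos).mpr hγW
    rw [hβdef]; linarith
  have hβlt : β < 1 := by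
    have h1 : 0 < γ / W.card := div_pos hγpos hWpos
    rw [hβdef]; linarith
  clear_value β
  have hkey : ∀ c ∈ C, (1 - ε) * ((F c).card : ℝ) ≤ β * ((F' c).card : ℝ) := by
    intro c hc
    have hsub := (hF'1 c hc).1
    have hlt := (hF'1 c hc).2
    have hcW : (F c).card ≤ W.card := Finset.card_le_card (hFW c hc)
    have hc1 : 1 ≤ (F c).card := Finset.card_pos.mpr (hFinv c hc).1
    have hc'W : (F' c).card ≤ W.card := le_trans (Finset.card_le_card hsub) hcW
    have h1 : γ ≤ ((F' c).card : ℝ) - (1 - ε) * ((F c).card : ℝ) := by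
      rw [hγdef]
      apply Finset.min'_le
      rw [hTT]
      apply Finset.mem_insert_of_mem
      apply Finset.mem_image.mpr
      exact ⟨((F c).card, (F' c).card), Finset.mem_filter.mpr
        ⟨Finset.mem_product.mpr ⟨Finset.mem_Icc.mpr ⟨hc1, hcW⟩,
          Finset.mem_Icc.mpr ⟨Nat.zero_le _, hc'W⟩⟩, hlt⟩, rfl⟩
    have h2 : ((F' c).card : ℝ) ≤ (W.card : ℝ) := by exact_mod_cast hc'W
    have h3 : γ / W.card * ((F' c).card : ℝ) ≤ γ := by
      rw [div_mul_eq_mul_div, div_le_iff₀ hWpos]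
      nlinarith
    have h4 : β * ((F' c).card : ℝ) = ((F' c).card : ℝ) - γ / W.card * ((F' c).card : ℝ) := by
      rw [hβdef]; ring
    linarith
  -- constants
  set Wp : Finset G := (insert (1:G) K) * W with hWp
  have hWWp : W ⊆ Wp := fun w hw =>
    Finset.mem_mul.mpr ⟨1, Finset.mem_insert_self _ _, w, hw, one_mul w⟩
  set V : Finset G := Wp * Wp⁻¹ with hV
  set Dc : X → Finset G := fun c => (K * F c) ∆ (F c) with hDc
  have hDsub : ∀ c ∈ C, Dc c ⊆ Wp := by
    intro c hc g hg
    rcases Finset.mem_symmDiff.mp hg with ⟨h1, -⟩ | ⟨h1, -⟩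
    · exact (Finset.mul_subset_mul (Finset.subset_insert 1 K) (hFW c hc)) h1
    · exact hWWp (hFW c hc h1)
  have hDcard : ∀ c ∈ C, ((Dc c).card : ℝ) < δ * (1 - ε) * (F c).card := by
    intro c hc
    have h1 := (hFinv c hc).2
    have h2 : ((K : Set G) * (F c : Set G)) ∆ ((F c : Set G)) = ↑(Dc c) := by
      rw [hDc, Finset.coe_symmDiff, Finset.coe_mul]
    rwa [h2, Set.ncard_coe_finset] at h1
  set Q : ℝ := δ * (1 - ε) * W.card with hQ
  have hQpos : 0 < Q := by
    rw [hQ]; apply mul_pos (mul_pos hδ (by linarith)) hWpos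
  set M : ℝ := Q * Wp.card * V.card + 1 with hM
  have hMpos : 0 < M := by
    have h1 : (0:ℝ) ≤ Q * Wp.card * V.card :=
      mul_nonneg (mul_nonneg hQpos.le (Nat.cast_nonneg _)) (Nat.cast_nonneg _)
    rw [hM]; linarith
  set η : ℝ := δ * (1 - β) * α / M with hη
  have hηpos : 0 < η := by
    rw [hη]; exact div_pos (mul_pos (mul_pos hδ (by linarith)) hα) hMpos
  clear_value Q M η
  obtain ⟨h₀, hh₀⟩ := hF₀ne.exists_mem
  set U' : Finset G := (V * F₀).image (fun g => h₀⁻¹ * g) with hU'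
  obtain ⟨F₁, hF₁ne, hF₁inv⟩ := hAm U' η hηpos
  have hF₁pos : (0:ℝ) < F₁.card := by exact_mod_cast Finset.card_pos.mpr hF₁ne
  set SD : Finset G := (U' * F₁) ∆ F₁ with hSD
  have hSDcard : ((SD).card : ℝ) < η * F₁.card := by
    have h1 := hF₁inv
    have h2 : ((U' : Set G) * (F₁ : Set G)) ∆ (F₁ : Set G) = ↑SD := by
      rw [hSD, Finset.coe_symmDiff, Finset.coe_mul]
    rwa [h2, Set.ncard_coe_finset] at h1
  set F₂ : Finset G := F₀ * F₁ with hF₂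
  -- the boundary of F₂
  set bd : Finset G := F₂.filter (fun g => ∃ w ∈ V, w * g ∉ F₂) with hbd
  have hbdcard : (bd.card : ℝ) ≤ (V.card : ℝ) * SD.card := by
    have hsub : bd ⊆ V⁻¹ * ({h₀} * SD) := by
      intro g hg
      obtain ⟨hgF₂, w, hwV, hwg⟩ := Finset.mem_filter.mp hg
      rw [hF₂] at hgF₂
      obtain ⟨h, hh, f, hf, rfl⟩ := Finset.mem_mul.mp hgF₂
      have hs : h₀⁻¹ * (w * (h * f)) ∈ SD := by
        rw [hSD, Finset.mem_symmDiff]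
        left
        constructor
        · exact Finset.mem_mul.mpr ⟨h₀⁻¹ * (w * h),
            Finset.mem_image.mpr ⟨w * h, Finset.mul_mem_mul hwV hh, rfl⟩, f, hf, by group⟩
        · intro hmem
          apply hwg
          have h3 : h₀ * (h₀⁻¹ * (w * (h * f))) ∈ F₀ * F₁ := Finset.mul_mem_mul hh₀ hmem
          have h4 : w * (h * f) = h₀ * (h₀⁻¹ * (w * (h * f))) := by group
          rw [hF₂, h4]
          exact h3
      refine Finset.mem_mul.mpr ⟨w⁻¹, Finset.inv_mem_inv hwV,
        h₀ * (h₀⁻¹ * (w * (h * f))),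
        Finset.mul_mem_mul (Finset.mem_singleton_self h₀) hs, by group⟩
    have hn : bd.card ≤ V.card * SD.card := by
      calc bd.card ≤ (V⁻¹ * ({h₀} * SD)).card := Finset.card_le_card hsub
        _ ≤ V⁻¹.card * ({h₀} * SD).card := Finset.card_mul_le
        _ ≤ V.card * SD.card := by
            rw [Finset.card_inv]
            apply Nat.mul_le_mul_left
            simpa using Finset.card_mul_le (s := ({h₀} : Finset G)) (t := SD)
    exact_mod_cast hn
  -- the witness translate set
  refine ⟨F₂, Finset.Nonempty.mul ⟨h₀, hh₀⟩ hF₁ne, ?_⟩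
  intro x
  rw [key (((K : Set G) • A) ∆ A) F₂ x, key A F₂ x, Set.ncard_coe_finset,
    Set.ncard_coe_finset]
  set Φ : Finset X := F₂.image (fun g => g • x) with hΦ
  set AΦ : Finset X := Φ.filter (· ∈ A) with hAΦdef
  set BΦ : Finset X := Φ.filter (· ∈ ((K : Set G) • A) ∆ A) with hBΦdef
  have hrep : ∀ y ∈ Φ, ∃ g, g ∈ F₂ ∧ g • x = y := by
    intro y hy
    obtain ⟨g, hg, hgy⟩ := Finset.mem_image.mp hy
    exact ⟨g, hg, hgy⟩
  -- density lower bound for A in Φ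
  have hAΦcard : α * F₁.card ≤ (AΦ.card : ℝ) := by
    set Af : G → Finset X := fun f => (F₀.image (fun h => (h * f) • x)).filter (· ∈ A) with hAf
    have step1 : ∀ f : G, α * F₀.card ≤ ((Af f).card : ℝ) := by
      intro f
      have h1 := hαz (f • x)
      have h2 : F₀.image (fun g => g • (f • x)) = F₀.image (fun h => (h * f) • x) :=
        Finset.image_congr (fun h _ => (mul_smul h f x).symm)
      rw [h2] at h1
      exact h1
    have step2 : ∀ f ∈ F₁, Af f ⊆ AΦ := by
      intro f hf y hy
      obtain ⟨hy1, hy2⟩ := Finset.mem_filter.mp hy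
      obtain ⟨h, hh, rfl⟩ := Finset.mem_image.mp hy1
      exact Finset.mem_filter.mpr
        ⟨Finset.mem_image.mpr ⟨h * f, Finset.mul_mem_mul hh hf, rfl⟩, hy2⟩
    have hcount : ∀ y ∈ AΦ, (F₁.filter (fun f => y ∈ Af f)).card ≤ F₀.card := by
      intro y hy
      obtain ⟨g, hgF₂, hgy⟩ := hrep y (Finset.mem_filter.mp hy).1
      have hsub : F₁.filter (fun f => y ∈ Af f) ⊆ F₀⁻¹ * {g} := by
        intro f hf
        obtain ⟨hfF₁, hyAf⟩ := Finset.mem_filter.mp hf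
        obtain ⟨h, hh, hhf⟩ := Finset.mem_image.mp (Finset.mem_filter.mp hyAf).1
        have heq : h * f = g := hinj x (hhf.trans hgy.symm)
        have hf' : f = h⁻¹ * g := eq_inv_mul_iff_mul_eq.mpr heq
        rw [hf']
        exact Finset.mul_mem_mul (Finset.mem_inv'.mpr (by simpa using hh))
          (Finset.mem_singleton_self g)
      calc (F₁.filter (fun f => y ∈ Af f)).card ≤ (F₀⁻¹ * {g}).card :=
            Finset.card_le_card hsub
        _ ≤ F₀⁻¹.card * ({g} : Finset G).card := Finset.card_mul_le
        _ = F₀.card := by rw [Finset.card_inv, Finset.card_singleton, mul_one]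
    have step3 : ∑ f ∈ F₁, (Af f).card ≤ F₀.card * AΦ.card := by
      calc ∑ f ∈ F₁, (Af f).card
          = ∑ f ∈ F₁, (AΦ.filter (· ∈ Af f)).card := by
            refine Finset.sum_congr rfl fun f hf => ?_
            rw [Finset.filter_mem_eq_inter, Finset.inter_eq_right.mpr (step2 f hf)]
        _ = ∑ f ∈ F₁, ∑ y ∈ AΦ, if y ∈ Af f then 1 else 0 :=
            Finset.sum_congr rfl fun f _ => Finset.card_filter _ _
        _ = ∑ y ∈ AΦ, ∑ f ∈ F₁, if y ∈ Af f then 1 else 0 := Finset.sum_comm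
        _ = ∑ y ∈ AΦ, (F₁.filter (fun f => y ∈ Af f)).card :=
            Finset.sum_congr rfl fun y _ => (Finset.card_filter _ _).symm
        _ ≤ ∑ _y ∈ AΦ, F₀.card := Finset.sum_le_sum hcount
        _ = AΦ.card * F₀.card := by rw [Finset.sum_const, smul_eq_mul]
        _ = F₀.card * AΦ.card := Nat.mul_comm _ _
    have step4 : α * F₀.card * F₁.card ≤ (F₀.card : ℝ) * AΦ.card := by
      have h1 : α * F₀.card * F₁.card ≤ ∑ f ∈ F₁, ((Af f).card : ℝ) := by
        calc α * F₀.card * F₁.card = ∑ _f ∈ F₁, α * F₀.card := by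
              rw [Finset.sum_const, nsmul_eq_mul]; ring
          _ ≤ ∑ f ∈ F₁, ((Af f).card : ℝ) := Finset.sum_le_sum fun f _ => step1 f
      have h2 : (∑ f ∈ F₁, ((Af f).card : ℝ)) ≤ (F₀.card : ℝ) * AΦ.card := by
        push_cast
        exact_mod_cast step3
      linarith
    have h5 : (F₀.card : ℝ) * (α * F₁.card) ≤ F₀.card * AΦ.card := by
      calc (F₀.card : ℝ) * (α * F₁.card) = α * F₀.card * F₁.card := by ring
        _ ≤ (F₀.card : ℝ) * AΦ.card := step4
    exact le_of_mul_le_mul_left h5 hF₀pos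
  -- the relevant tiles
  set Cx : Finset X := ((Wp⁻¹ * F₂).image (fun g => g • x)).filter
      (fun c => c ∈ C ∧ ∃ y ∈ Φ, y ∈ (Dc c).image (fun g => g • c)) with hCx
  have hBsub : BΦ ⊆ Cx.biUnion (fun c => (Dc c).image (fun g => g • c)) := by
    intro y hy
    obtain ⟨hyΦ, hyB⟩ := Finset.mem_filter.mp hy
    have hcd : ∃ c ∈ C, ∃ d ∈ Dc c, d • c = y := by
      rcases Set.mem_symmDiff.mp hyB with ⟨hyK, hyA⟩ | ⟨hyA, hyK⟩
      · obtain ⟨k, hk, a, ha, hka⟩ := Set.mem_smul.mp hyK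
        have ha' := ha
        rw [hA] at ha'
        simp only [Set.mem_iUnion] at ha'
        obtain ⟨c, hc, f, hf, hfc0⟩ := ha'
        have hfc : f • c = a := hfc0
        refine ⟨c, hc, k * f, ?_, by rw [mul_smul, hfc, hka]⟩
        rw [hDc]
        apply Finset.mem_symmDiff.mpr
        left
        refine ⟨Finset.mul_mem_mul hk hf, ?_⟩
        intro hmem
        apply hyA
        rw [hA]
        simp only [Set.mem_iUnion]
        exact ⟨c, hc, k * f, hmem, by show (k * f) • c = y; rw [mul_smul, hfc, hka]⟩
      · have hyA' := hyA
        rw [hA] at hyA'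
        simp only [Set.mem_iUnion] at hyA'
        obtain ⟨c, hc, f, hf, hfc0⟩ := hyA'
        have hfc : f • c = y := hfc0
        refine ⟨c, hc, f, ?_, hfc⟩
        rw [hDc]
        apply Finset.mem_symmDiff.mpr
        right
        refine ⟨hf, ?_⟩
        intro hmem
        apply hyK
        obtain ⟨k, hk, f', hf', hkf⟩ := Finset.mem_mul.mp hmem
        apply Set.mem_smul.mpr
        refine ⟨k, hk, f' • c, ?_, ?_⟩
        · rw [hA]
          simp only [Set.mem_iUnion]
          exact ⟨c, hc, f', hf', rfl⟩
        · rw [← hfc, ← hkf, mul_smul]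
    obtain ⟨c, hc, d, hd, hdc⟩ := hcd
    have hcx : c ∈ Cx := by
      rw [hCx]
      apply Finset.mem_filter.mpr
      constructor
      · obtain ⟨g, hg, hgy⟩ := hrep y hyΦ
        apply Finset.mem_image.mpr
        refine ⟨d⁻¹ * g, Finset.mul_mem_mul (Finset.inv_mem_inv (hDsub c hc hd)) hg, ?_⟩
        rw [mul_smul, hgy, ← hdc, inv_smul_smul]
      · exact ⟨hc, y, hyΦ, Finset.mem_image.mpr ⟨d, hd, hdc⟩⟩
    exact Finset.mem_biUnion.mpr ⟨c, hcx, Finset.mem_image.mpr ⟨d, hd, hdc⟩⟩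
  have hCxC : ∀ c ∈ Cx, c ∈ C := fun c hc => ((Finset.mem_filter.mp hc).2).1
  set tile' : X → Finset X := fun c => (F' c).image (fun g => g • c) with htile
  set Cint : Finset X := Cx.filter (fun c => tile' c ⊆ Φ) with hCint
  set Cbad : Finset X := Cx.filter (fun c => ¬ tile' c ⊆ Φ) with hCbad
  have hB1 : (BΦ.card : ℝ) ≤
      (∑ c ∈ Cint, ((Dc c).card : ℝ)) + ∑ c ∈ Cbad, ((Dc c).card : ℝ) := by
    have h1 : BΦ.card ≤ ∑ c ∈ Cx, ((Dc c).image (fun g => g • c)).card :=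
      le_trans (Finset.card_le_card hBsub) Finset.card_biUnion_le
    have h2 : ∑ c ∈ Cx, ((Dc c).image (fun g => g • c)).card ≤ ∑ c ∈ Cx, (Dc c).card :=
      Finset.sum_le_sum fun c _ => Finset.card_image_le
    have h3 : (∑ c ∈ Cint, ((Dc c).card : ℝ)) + ∑ c ∈ Cbad, ((Dc c).card : ℝ)
        = ∑ c ∈ Cx, ((Dc c).card : ℝ) := by
      rw [hCint, hCbad]
      exact Finset.sum_filter_add_sum_filter_not Cx _ _
    rw [h3]
    push_cast
    exact_mod_cast le_trans h1 h2
  -- interior estimate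
  have hint : ∑ c ∈ Cint, ((Dc c).card : ℝ) ≤ δ * β * AΦ.card := by
    have h1 : ∀ c ∈ Cint, ((Dc c).card : ℝ) ≤ δ * β * (F' c).card := by
      intro c hc
      have hcC : c ∈ C := hCxC c (Finset.mem_filter.mp hc).1
      have hd1 := hDcard c hcC
      have hd2 := hkey c hcC
      nlinarith
    have hsum : ∑ c ∈ Cint, (F' c).card ≤ AΦ.card := by
      have hdisjt : ∀ c ∈ Cint, ∀ c' ∈ Cint, c ≠ c' → Disjoint (tile' c) (tile' c') := by
        intro c hc c' hc' hne
        have hd := hF'2 c (hCxC c (Finset.mem_filter.mp hc).1)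
          c' (hCxC c' (Finset.mem_filter.mp hc').1) hne
        rw [← Finset.disjoint_coe]
        rw [htile]
        simpa [Finset.coe_image] using hd
      have e1 : ∑ c ∈ Cint, (F' c).card = ∑ c ∈ Cint, (tile' c).card := by
        refine Finset.sum_congr rfl fun c hc => ?_
        rw [htile]
        exact (Finset.card_image_of_injective _ (hinj c)).symm
      rw [e1, ← Finset.card_biUnion hdisjt]
      apply Finset.card_le_card
      intro y hy
      obtain ⟨c, hc, hyc⟩ := Finset.mem_biUnion.mp hy
      have hcC : c ∈ C := hCxC c (Finset.mem_filter.mp hc).1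
      have hcΦ : tile' c ⊆ Φ := (Finset.mem_filter.mp hc).2
      obtain ⟨f, hf, hfc⟩ := Finset.mem_image.mp hyc
      refine Finset.mem_filter.mpr ⟨hcΦ hyc, ?_⟩
      rw [hA]
      simp only [Set.mem_iUnion]
      exact ⟨c, hcC, f, (hF'1 c hcC).1 hf, hfc⟩
    calc ∑ c ∈ Cint, ((Dc c).card : ℝ) ≤ ∑ c ∈ Cint, δ * β * ((F' c).card : ℝ) :=
          Finset.sum_le_sum h1
      _ = δ * β * ∑ c ∈ Cint, ((F' c).card : ℝ) := by rw [Finset.mul_sum]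
      _ ≤ δ * β * AΦ.card := by
          apply mul_le_mul_of_nonneg_left _ (mul_nonneg hδ.le hβpos.le)
          push_cast
          exact_mod_cast hsum
  -- boundary estimate
  have hbad1 : (Cbad.card : ℝ) ≤ (Wp.card : ℝ) * bd.card := by
    have hsub : Cbad ⊆ (Wp⁻¹ * bd).image (fun g => g • x) := by
      intro c hc
      obtain ⟨hcx, hnot⟩ := Finset.mem_filter.mp hc
      obtain ⟨hcim, hcC, y, hyΦ, hyD⟩ := Finset.mem_filter.mp hcx
      obtain ⟨d, hd, hdc⟩ := Finset.mem_image.mp hyD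
      obtain ⟨z, hz, hzΦ⟩ := Finset.not_subset.mp hnot
      obtain ⟨f', hf', hfz⟩ := Finset.mem_image.mp hz
      obtain ⟨g, hgF₂, hgy⟩ := hrep y hyΦ
      have hdWp : d ∈ Wp := hDsub c hcC hd
      have hfWp : f' ∈ Wp := hWWp (hFW c hcC ((hF'1 c hcC).1 hf'))
      have hwV : f' * d⁻¹ ∈ V := by
        rw [hV]; exact Finset.mul_mem_mul hfWp (Finset.inv_mem_inv hdWp)
      have hgbd : g ∈ bd := by
        rw [hbd]
        refine Finset.mem_filter.mpr ⟨hgF₂, f' * d⁻¹, hwV, ?_⟩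
        intro hmem
        apply hzΦ
        have hz2 : (f' * d⁻¹ * g) • x = z := by
          rw [mul_smul, hgy, ← hdc, ← hfz, smul_smul, inv_mul_cancel_right]
        rw [← hz2]
        exact Finset.mem_image.mpr ⟨f' * d⁻¹ * g, hmem, rfl⟩
      apply Finset.mem_image.mpr
      refine ⟨d⁻¹ * g, Finset.mul_mem_mul (Finset.inv_mem_inv hdWp) hgbd, ?_⟩
      rw [mul_smul, hgy, ← hdc, inv_smul_smul]
    have hn : Cbad.card ≤ Wp.card * bd.card := by
      calc Cbad.card ≤ ((Wp⁻¹ * bd).image (fun g => g • x)).card :=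
            Finset.card_le_card hsub
        _ ≤ (Wp⁻¹ * bd).card := Finset.card_image_le
        _ ≤ Wp⁻¹.card * bd.card := Finset.card_mul_le
        _ = Wp.card * bd.card := by rw [Finset.card_inv]
    exact_mod_cast hn
  have hbadsum : ∑ c ∈ Cbad, ((Dc c).card : ℝ) ≤ Q * Cbad.card := by
    have h1 : ∀ c ∈ Cbad, ((Dc c).card : ℝ) ≤ Q := by
      intro c hc
      have hcC : c ∈ C := hCxC c (Finset.mem_filter.mp hc).1
      have hd1 := hDcard c hcC
      have hd2 : ((F c).card : ℝ) ≤ W.card := by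
        exact_mod_cast Finset.card_le_card (hFW c hcC)
      have hd3 : 0 < δ * (1 - ε) := mul_pos hδ (by linarith)
      rw [hQ]
      nlinarith
    calc ∑ c ∈ Cbad, ((Dc c).card : ℝ) ≤ ∑ _c ∈ Cbad, Q := Finset.sum_le_sum h1
      _ = Cbad.card * Q := by rw [Finset.sum_const, nsmul_eq_mul]
      _ = Q * Cbad.card := by ring
  -- assemble
  have hAΦpos : (0:ℝ) < AΦ.card := lt_of_lt_of_le (mul_pos hα hF₁pos) hAΦcard
  have hbadchain : ∑ c ∈ Cbad, ((Dc c).card : ℝ) ≤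
      Q * Wp.card * V.card * (η * F₁.card) := by
    have h1 : (Cbad.card : ℝ) ≤ (Wp.card : ℝ) * (V.card * (η * F₁.card)) := by
      have h2 : (bd.card : ℝ) ≤ (V.card : ℝ) * (η * F₁.card) := by
        calc (bd.card : ℝ) ≤ (V.card : ℝ) * SD.card := hbdcard
          _ ≤ (V.card : ℝ) * (η * F₁.card) :=
              mul_le_mul_of_nonneg_left hSDcard.le (Nat.cast_nonneg _)
      calc (Cbad.card : ℝ) ≤ (Wp.card : ℝ) * bd.card := hbad1
        _ ≤ (Wp.card : ℝ) * (V.card * (η * F₁.card)) :=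
            mul_le_mul_of_nonneg_left h2 (Nat.cast_nonneg _)
    calc ∑ c ∈ Cbad, ((Dc c).card : ℝ) ≤ Q * Cbad.card := hbadsum
      _ ≤ Q * ((Wp.card : ℝ) * (V.card * (η * F₁.card))) :=
          mul_le_mul_of_nonneg_left h1 hQpos.le
      _ = Q * Wp.card * V.card * (η * F₁.card) := by ring
  have hMη : M * η = δ * (1 - β) * α := by
    rw [hη]
    field_simp
  have hgap : Q * Wp.card * V.card * (η * F₁.card) < δ * (1 - β) * (AΦ.card : ℝ) := by
    have h5 : δ * (1 - β) * (α * F₁.card) ≤ δ * (1 - β) * AΦ.card :=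
      mul_le_mul_of_nonneg_left hAΦcard (mul_nonneg hδ.le (by linarith)) 
    have h6 : Q * Wp.card * V.card * (η * F₁.card) < M * (η * F₁.card) := by
      have h7 : 0 < η * F₁.card := mul_pos hηpos hF₁pos
      rw [hM]
      nlinarith
    have h8 : M * (η * F₁.card) = δ * (1 - β) * (α * F₁.card) := by
      rw [← mul_assoc, hMη]; ring
    linarith
  have hfin : (BΦ.card : ℝ) < δ * AΦ.card := by
    have e : δ * β * (AΦ.card : ℝ) + δ * (1 - β) * AΦ.card = δ * AΦ.card := by ring
    linarith
  exact hfin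
end

section
/- Let X be a standard Borel space, let G be a countable group, and let G ↷ X be a free Borel action. Let Y ⊆ X be Borel, let T ⊆ G be finite, and let ε ∈ (0, 1/2). Then there is a Borel set C ⊆ X and a Borel function assigning to each c ∈ C a set T_c ⊆ T such that: |T_c| > (1−ε)|T| for every c ∈ C; the sets {T_c c : c ∈ C} are pairwise disjoint and disjoint from Y; Y ∪ ⋃_{c∈C} T_c c = Y ∪ TC; and |(Y ∪ TC) ∩ Tx| ≥ ε|T| for all x ∈ X. -/
open Set Function
open scoped Pointwise Classical

namespace Stmt8Aux

variable {G : Type*} [Group G] {X : Type*} [MeasurableSpace X] [MulAction G X]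

/-- A Borel proper coloring for the graph `x ~ g • x`, `g ∈ D`, `g ≠ 1`. -/
lemma exists_coloring {X : Type*} [MeasurableSpace X] [StandardBorelSpace X] [MulAction G X]
    (hmeas : ∀ g : G, Measurable fun x : X => g • x)
    (hfree : ∀ g : G, g ≠ 1 → ∀ x : X, g • x ≠ x) (D : Finset G) :
    ∃ col : X → ℕ, Measurable col ∧
      ∀ g ∈ D, g ≠ 1 → ∀ x : X, col (g • x) ≠ col x := by
  obtain ⟨f, hf, hfinj⟩ :=
    MeasurableSpace.measurable_injection_nat_bool_of_countablySeparated X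
  set E : Finset ℕ × Finset ℕ → Set X := fun p =>
    (⋂ i ∈ p.1, {x | f x i = true}) ∩ ⋂ i ∈ p.2, {x | f x i = false} with hEdef
  have hEmeas : ∀ p, MeasurableSet (E p) := by
    intro p
    have h1 : ∀ (i : ℕ) (b : Bool), MeasurableSet {x : X | f x i = b} := by
      intro i b
      have : {x : X | f x i = b} = f ⁻¹' ((fun v : ℕ → Bool => v i) ⁻¹' {b}) := rfl
      rw [this]
      exact hf ((measurable_pi_apply i) (measurableSet_singleton b))
    exact ((MeasurableSet.biInter (Set.to_countable _) fun i _ => h1 i true).inter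
      (MeasurableSet.biInter (Set.to_countable _) fun i _ => h1 i false))
  have hmemE : ∀ p x, x ∈ E p ↔ (∀ i ∈ p.1, f x i = true) ∧ ∀ i ∈ p.2, f x i = false := by
    intro p x; simp [hEdef]
  set Q : ℕ → X → Prop := fun k x => ∃ p : Finset ℕ × Finset ℕ,
    Encodable.encode p = k ∧ x ∈ E p ∧ ∀ g ∈ D, g ≠ 1 → g • x ∉ E p with hQdef
  have hex : ∀ x, ∃ k, Q k x := by
    intro x
    set D' : Finset G := D.erase 1 with hD'
    have key : ∀ g ∈ D', ∃ i, f (g • x) i ≠ f x i := by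
      intro g hg
      have h1 : g ≠ 1 := (Finset.mem_erase.1 hg).1
      by_contra h
      push_neg at h
      exact hfree g h1 x (hfinj (funext h))
    choose! ix hix using key
    set s : Finset ℕ := (D'.filter fun g => f x (ix g) = true).image ix with hs
    set t : Finset ℕ := (D'.filter fun g => f x (ix g) = false).image ix with ht
    refine ⟨Encodable.encode (s, t), (s, t), rfl, ?_, ?_⟩
    · rw [hmemE]
      constructor
      · intro i hi
        obtain ⟨g, hg, rfl⟩ := Finset.mem_image.1 hi
        exact (Finset.mem_filter.1 hg).2
      · intro i hi
        obtain ⟨g, hg, rfl⟩ := Finset.mem_image.1 hi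
        exact (Finset.mem_filter.1 hg).2
    · intro g hg h1 hmem
      have hg' : g ∈ D' := Finset.mem_erase.2 ⟨h1, hg⟩
      rw [hmemE] at hmem
      rcases Bool.eq_false_or_eq_true (f x (ix g)) with hb | hb
      · have : ix g ∈ s := Finset.mem_image.2 ⟨g, Finset.mem_filter.2 ⟨hg', hb⟩, rfl⟩
        have := hmem.1 (ix g) this
        exact hix g hg' (this.trans hb.symm)
      · have : ix g ∈ t := Finset.mem_image.2 ⟨g, Finset.mem_filter.2 ⟨hg', hb⟩, rfl⟩
        have := hmem.2 (ix g) this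
        exact hix g hg' (this.trans hb.symm)
  have hQmeas : ∀ k, MeasurableSet {x | Q k x} := by
    intro k
    have : {x | Q k x} = ⋃ p : Finset ℕ × Finset ℕ, ⋃ (_ : Encodable.encode p = k),
        (E p ∩ ⋂ g ∈ D, ⋂ (_ : g ≠ 1), (fun x => g • x) ⁻¹' (E p)ᶜ) := by
      ext x
      simp only [hQdef, mem_setOf_eq, mem_iUnion, mem_inter_iff, mem_iInter, mem_preimage,
        mem_compl_iff]
      tauto
    rw [this]
    refine MeasurableSet.iUnion fun p => MeasurableSet.iUnion fun _ => ?_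
    exact (hEmeas p).inter (MeasurableSet.biInter
      (Set.Finite.countable (D.finite_toSet)) fun g _ =>
      MeasurableSet.iInter fun _ => (hmeas g) (hEmeas p).compl)
  refine ⟨fun x => Nat.find (hex x), ?_, ?_⟩
  · apply measurable_to_countable'
    intro k
    have : (fun x => Nat.find (hex x)) ⁻¹' {k} =
        {x | Q k x} ∩ ⋂ j, ⋂ (_ : j < k), {x | Q j x}ᶜ := by
      ext x
      simp only [mem_preimage, mem_singleton_iff, Nat.find_eq_iff, mem_inter_iff, mem_setOf_eq,
        mem_iInter, mem_compl_iff]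
    rw [this]
    exact (hQmeas k).inter (MeasurableSet.biInter (Set.to_countable _) fun j _ =>
      (hQmeas j).compl)
  · intro g hg h1 x h
    obtain ⟨p, hpk, hxE, hxAvoid⟩ := Nat.find_spec (hex x)
    obtain ⟨p', hpk', hgE, _⟩ := Nat.find_spec (hex (g • x))
    have hpp : p' = p := Encodable.encode_injective (by rw [hpk, hpk']; exact h)
    rw [hpp] at hgE
    exact hxAvoid g hg h1 hgE

noncomputable def tcOf (T : Finset G) (Z : Set X) (x : X) : Finset G :=
  T.filter fun t => t • x ∉ Z

noncomputable def nIn (T : Finset G) (Z : Set X) (x : X) : ℕ :=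
  (T.filter fun t => t • x ∈ Z).card

def stage (T : Finset G) (col : X → ℕ) (ε : ℝ) (Z : Set X) (n : ℕ) : Set X :=
  {x | col x = n ∧ (nIn T Z x : ℝ) < ε * T.card}

noncomputable def Zseq (T : Finset G) (Y : Set X) (col : X → ℕ) (ε : ℝ) : ℕ → Set X
  | 0 => Y
  | n + 1 => Zseq T Y col ε n ∪
      ⋃ c ∈ stage T col ε (Zseq T Y col ε n) n,
        (fun g : G => g • c) '' ((tcOf T (Zseq T Y col ε n) c : Finset G) : Set G)

lemma nIn_add_tcOf_card (T : Finset G) (Z : Set X) (x : X) :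
    nIn T Z x + (tcOf T Z x).card = T.card := by
  classical
  simpa [nIn, tcOf] using Finset.card_filter_add_card_filter_not
    (s := T) (p := fun t => t • x ∈ Z)

lemma meas_smul_image (hmeas : ∀ g : G, Measurable fun x : X => g • x) (g : G)
    {s : Set X} (hs : MeasurableSet s) :
    MeasurableSet ((fun x : X => g • x) '' s) := by
  have : (fun x : X => g • x) '' s = (fun x : X => g⁻¹ • x) ⁻¹' s := by
    ext y
    constructor
    · rintro ⟨x, hx, rfl⟩; simpa [inv_smul_smul] using hx
    · intro hy; exact ⟨g⁻¹ • y, hy, smul_inv_smul g y⟩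
  rw [this]
  exact hmeas g⁻¹ hs

lemma meas_nIn (hmeas : ∀ g : G, Measurable fun x : X => g • x) (T : Finset G)
    {Z : Set X} (hZ : MeasurableSet Z) : Measurable fun x : X => nIn T Z x := by
  have : (fun x : X => nIn T Z x) = fun x => ∑ t ∈ T, if t • x ∈ Z then 1 else 0 := by
    funext x; exact Finset.card_filter _ _
  rw [this]
  exact Finset.measurable_sum _ fun t _ =>
    Measurable.ite (hmeas t hZ) measurable_const measurable_const

lemma meas_stage (hmeas : ∀ g : G, Measurable fun x : X => g • x) (T : Finset G)
    {col : X → ℕ} (hcol : Measurable col) (ε : ℝ) {Z : Set X} (hZ : MeasurableSet Z) (n : ℕ) :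
    MeasurableSet (stage T col ε Z n) := by
  have : stage T col ε Z n =
      col ⁻¹' {n} ∩ (fun x => nIn T Z x) ⁻¹' {k : ℕ | (k : ℝ) < ε * T.card} := by
    ext x; simp [stage]
  rw [this]
  exact (hcol (measurableSet_singleton n)).inter
    ((meas_nIn hmeas T hZ) (MeasurableSpace.measurableSet_top))

lemma meas_tcOf_eq [Countable G] (hmeas : ∀ g : G, Measurable fun x : X => g • x)
    (T : Finset G) {Z : Set X} (hZ : MeasurableSet Z) (S : Finset G) :
    MeasurableSet {x : X | tcOf T Z x = S} := by
  by_cases hST : S ⊆ T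
  · have h : {x : X | tcOf T Z x = S} = ⋂ t ∈ T, {x | t • x ∉ Z ↔ t ∈ S} := by
      ext x
      simp only [mem_setOf_eq, mem_iInter]
      constructor
      · rintro h t ht
        rw [← h]
        simp [tcOf, ht]
      · intro h
        ext t
        simp only [tcOf, Finset.mem_filter]
        constructor
        · rintro ⟨ht, hz⟩; exact (h t ht).1 hz
        · intro hts; exact ⟨hST hts, (h _ (hST hts)).2 hts⟩
    rw [h]
    refine MeasurableSet.biInter (Set.Finite.countable (T.finite_toSet)) fun t _ => ?_
    by_cases hts : t ∈ S
    · have : {x : X | t • x ∉ Z ↔ t ∈ S} = (fun x : X => t • x) ⁻¹' Zᶜ := by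
        ext x; simp [hts]
      rw [this]; exact hmeas t hZ.compl
    · have : {x : X | t • x ∉ Z ↔ t ∈ S} = (fun x : X => t • x) ⁻¹' Z := by
        ext x; simp [hts]
      rw [this]; exact hmeas t hZ
  · have : {x : X | tcOf T Z x = S} = ∅ := by
      ext x
      simp only [mem_setOf_eq, mem_empty_iff_false, iff_false]
      intro h
      exact hST (h ▸ Finset.filter_subset _ _)
    rw [this]; exact MeasurableSet.empty

end Stmt8Aux

open Stmt8Aux

/-- **Borel packing lemma.** Given a free Borel action `G ↷ X` of a countable group on a
standard Borel space, a Borel set `Y ⊆ X`, a finite `T ⊆ G`, and `ε ∈ (0,1/2)`, there are a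
Borel set `C ⊆ X` and a Borel assignment `c ↦ T_c ⊆ T` with `|T_c| > (1-ε)|T|`, the sets
`T_c c` (`c ∈ C`) pairwise disjoint and disjoint from `Y`,
`Y ∪ ⋃_{c ∈ C} T_c c = Y ∪ TC`, and `|(Y ∪ TC) ∩ Tx| ≥ ε|T|` for every `x ∈ X`. -/
theorem stmt8 {G : Type*} [Group G] [Countable G]
    {X : Type*} [MeasurableSpace X] [StandardBorelSpace X] [MulAction G X]
    (hmeas : ∀ g : G, Measurable fun x : X => g • x)
    (hfree : ∀ g : G, g ≠ 1 → ∀ x : X, g • x ≠ x)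
    (Y : Set X) (hY : MeasurableSet Y)
    (T : Finset G) (ε : ℝ) (hε : 0 < ε) (hε2 : ε < 1 / 2) :
    ∃ (C : Set X) (Tc : X → Finset G), MeasurableSet C ∧
      (∀ S : Finset G, MeasurableSet {c | c ∈ C ∧ Tc c = S}) ∧
      (∀ c ∈ C, Tc c ⊆ T ∧ (1 - ε) * (T.card : ℝ) < ((Tc c).card : ℝ)) ∧
      (∀ c ∈ C, ∀ c' ∈ C, c ≠ c' →
        Disjoint ((fun g : G => g • c) '' ((Tc c : Set G)))
          ((fun g : G => g • c') '' ((Tc c' : Set G)))) ∧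
      (∀ c ∈ C, Disjoint ((fun g : G => g • c) '' ((Tc c : Set G))) Y) ∧
      (Y ∪ ⋃ c ∈ C, (fun g : G => g • c) '' ((Tc c : Set G)) = Y ∪ (T : Set G) • C) ∧
      (∀ x : X, ε * (T.card : ℝ) ≤
        (((Y ∪ (T : Set G) • C) ∩ (fun g : G => g • x) '' (T : Set G)).ncard : ℝ)) := by
  classical
  obtain ⟨col, hcolmeas, hcol⟩ := exists_coloring hmeas hfree (T⁻¹ * T)
  -- injectivity of orbit maps
  have hinj : ∀ x : X, Function.Injective fun g : G => g • x := by
    intro x g h hgh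
    simp only at hgh
    by_contra hne
    have h1 : h⁻¹ * g ≠ 1 := by
      intro h1
      rw [inv_mul_eq_one] at h1
      exact hne h1.symm
    exact hfree (h⁻¹ * g) h1 x (by rw [mul_smul, hgh, inv_smul_smul])
  set Z : ℕ → Set X := Zseq T Y col ε with hZdef
  have hZ0 : Z 0 = Y := rfl
  have hZsucc : ∀ n, Z (n + 1) = Z n ∪
      ⋃ c ∈ stage T col ε (Z n) n, (fun g : G => g • c) '' ((tcOf T (Z n) c : Finset G) : Set G) :=
    fun n => rfl
  have hZmono : Monotone Z := monotone_nat_of_le_succ fun n => by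
    rw [hZsucc n]; exact subset_union_left
  have hYsub : ∀ n, Y ⊆ Z n := fun n => hZ0 ▸ hZmono (Nat.zero_le n)
  set Cn : ℕ → Set X := fun n => stage T col ε (Z n) n with hCndef
  set C : Set X := ⋃ n, Cn n with hCdef
  set Tc : X → Finset G := fun x => tcOf T (Z (col x)) x with hTcdef
  have hcolCn : ∀ {n c}, c ∈ Cn n → col c = n := fun h => h.1
  have hmemC : ∀ {c}, c ∈ C → c ∈ Cn (col c) := by
    rintro c hc
    obtain ⟨n, hn⟩ := mem_iUnion.1 hc
    have h := hcolCn hn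
    subst h
    exact hn
  have hTcc : ∀ {n c}, c ∈ Cn n → Tc c = tcOf T (Z n) c := by
    intro n c hc
    have h := hcolCn hc
    show tcOf T (Z (col c)) c = tcOf T (Z n) c
    rw [h]
  -- image of Tc c lands in next stage, avoids current stage
  have himg_sub : ∀ {n c}, c ∈ Cn n →
      (fun g : G => g • c) '' ((Tc c : Finset G) : Set G) ⊆ Z (n + 1) := by
    intro n c hc
    rw [hTcc hc, hZsucc n]
    intro y hy
    exact Or.inr (mem_biUnion hc hy)
  have himg_avoid : ∀ {n c}, c ∈ Cn n →
      ∀ y ∈ (fun g : G => g • c) '' ((Tc c : Finset G) : Set G), y ∉ Z n := by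
    intro n c hc y hy
    rw [hTcc hc] at hy
    obtain ⟨t, ht, rfl⟩ := hy
    exact (Finset.mem_filter.1 ht).2
  -- measurability of Z n
  have hZmeas : ∀ n, MeasurableSet (Z n) := by
    intro n
    induction n with
    | zero => exact hY
    | succ n ih =>
      rw [hZsucc n]
      refine ih.union ?_
      have heq : (⋃ c ∈ stage T col ε (Z n) n,
          (fun g : G => g • c) '' ((tcOf T (Z n) c : Finset G) : Set G)) =
          ⋃ t ∈ T, (fun x : X => t • x) '' (stage T col ε (Z n) n ∩ {x | t • x ∉ Z n}) := by
        ext y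
        simp only [mem_iUnion, mem_image, exists_prop, Finset.coe_filter, tcOf,
          Finset.mem_coe, Finset.mem_filter, mem_setOf_eq, mem_inter_iff]
        constructor
        · rintro ⟨c, hc, t, ⟨⟨ht, htz⟩, rfl⟩⟩
          exact ⟨t, ht, c, ⟨hc, htz⟩, rfl⟩
        · rintro ⟨t, ht, c, ⟨hc, htz⟩, rfl⟩
          exact ⟨c, hc, t, ⟨⟨ht, htz⟩, rfl⟩⟩
      rw [heq]
      refine MeasurableSet.biUnion (Set.Finite.countable (T.finite_toSet)) fun t _ => ?_
      exact meas_smul_image hmeas t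
        ((meas_stage hmeas T hcolmeas ε ih n).inter ((hmeas t) ih.compl))
  have hCnmeas : ∀ n, MeasurableSet (Cn n) := fun n =>
    meas_stage hmeas T hcolmeas ε (hZmeas n) n
  -- the limit set
  set W : Set X := ⋃ n, Z n with hWdef
  have hZW : ∀ n, Z n ⊆ W := fun n => subset_iUnion Z n
  -- covering equalities
  have hE1 : Y ∪ ⋃ c ∈ C, (fun g : G => g • c) '' ((Tc c : Finset G) : Set G) = W := by
    apply Subset.antisymm
    · refine union_subset ((hYsub 0).trans (hZW 0)) ?_
      refine iUnion₂_subset fun c hc => ?_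
      exact (himg_sub (hmemC hc)).trans (hZW _)
    · refine iUnion_subset fun n => ?_
      induction n with
      | zero => exact hZ0 ▸ subset_union_left
      | succ n ih =>
        rw [hZsucc n]
        refine union_subset ih ?_
        refine iUnion₂_subset fun c hc => ?_
        have hcC : c ∈ C := mem_iUnion.2 ⟨n, hc⟩
        rw [← hTcc hc]
        exact subset_union_of_subset_right
          (subset_iUnion₂ (s := fun c _ => (fun g : G => g • c) '' ((Tc c : Finset G) : Set G))
            c hcC) Y
  have hE2 : Y ∪ (T : Set G) • C = W := by
    apply Subset.antisymm
    · refine union_subset ((hYsub 0).trans (hZW 0)) ?_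
      rintro y hy
      obtain ⟨t, ht, c, hc, rfl⟩ := hy
      have hc' := hmemC hc
      set n := col c with hn
      by_cases hz : t • c ∈ Z n
      · exact hZW n hz
      · have htT : t ∈ T := ht
        have : t ∈ Tc c := by
          rw [hTcc hc']
          exact Finset.mem_filter.2 ⟨htT, hz⟩
        exact hZW (n + 1) (himg_sub hc' ⟨t, this, rfl⟩)
    · refine iUnion_subset fun n => ?_
      induction n with
      | zero => exact hZ0 ▸ subset_union_left
      | succ n ih =>
        rw [hZsucc n]
        refine union_subset ih ?_
        refine iUnion₂_subset fun c hc => ?_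
        rintro y ⟨t, ht, rfl⟩
        have htT : t ∈ T := Finset.mem_filter.1 ht |>.1
        have hcC : c ∈ C := mem_iUnion.2 ⟨n, hc⟩
        exact Or.inr (Set.smul_mem_smul htT hcC)
  -- counting helper
  have hcount : ∀ (x : X) (S : Finset G), S ⊆ T → (∀ t ∈ S, t • x ∈ W) →
      (S.card : ℝ) ≤ ((W ∩ (fun g : G => g • x) '' ((T : Finset G) : Set G)).ncard : ℝ) := by
    intro x S hS hmem
    have hsub : (fun g : G => g • x) '' ((S : Finset G) : Set G) ⊆
        W ∩ (fun g : G => g • x) '' ((T : Finset G) : Set G) := by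
      rintro y ⟨t, ht, rfl⟩
      exact ⟨hmem t ht, ⟨t, hS ht, rfl⟩⟩
    have hfin : (W ∩ (fun g : G => g • x) '' ((T : Finset G) : Set G)).Finite :=
      (((T : Finset G) : Set G).toFinite.image _).subset inter_subset_right
    have hcard : ((fun g : G => g • x) '' ((S : Finset G) : Set G)).ncard = S.card := by
      rw [Set.ncard_image_of_injective _ (hinj x), Set.ncard_coe_finset]
    have := Set.ncard_le_ncard hsub hfin
    rw [hcard] at this
    exact_mod_cast this
  -- cardinality of Tc c
  have hTclarge : ∀ {n c}, c ∈ Cn n → (1 - ε) * (T.card : ℝ) < ((Tc c).card : ℝ) := by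
    intro n c hc
    have h1 : (nIn T (Z n) c : ℝ) < ε * T.card := hc.2
    have h2 : nIn T (Z n) c + (tcOf T (Z n) c).card = T.card := nIn_add_tcOf_card T (Z n) c
    rw [hTcc hc]
    have h2' : (nIn T (Z n) c : ℝ) + ((tcOf T (Z n) c).card : ℝ) = (T.card : ℝ) := by
      exact_mod_cast h2
    nlinarith [h1, h2']
  refine ⟨C, Tc, ?_, ?_, ?_, ?_, ?_, ?_, ?_⟩
  · exact MeasurableSet.iUnion hCnmeas
  · intro S
    have heq : {c | c ∈ C ∧ Tc c = S} = ⋃ n, Cn n ∩ {x | tcOf T (Z n) x = S} := by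
      ext c
      simp only [mem_setOf_eq, mem_iUnion, mem_inter_iff]
      constructor
      · rintro ⟨hc, hS⟩
        exact ⟨col c, hmemC hc, by rw [← hTcc (hmemC hc)]; exact hS⟩
      · rintro ⟨n, hc, hS⟩
        exact ⟨mem_iUnion.2 ⟨n, hc⟩, by rw [hTcc hc]; exact hS⟩
    rw [heq]
    exact MeasurableSet.iUnion fun n =>
      (hCnmeas n).inter (meas_tcOf_eq hmeas T (hZmeas n) S)
  · intro c hc
    have hc' := hmemC hc
    refine ⟨?_, hTclarge hc'⟩
    rw [hTcc hc']
    exact Finset.filter_subset _ _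
  · -- pairwise disjointness
    have hlt : ∀ c c', c ∈ C → c' ∈ C → col c < col c' →
        Disjoint ((fun g : G => g • c) '' ((Tc c : Finset G) : Set G))
          ((fun g : G => g • c') '' ((Tc c' : Finset G) : Set G)) := by
      intro c c' hc hc' hlt
      rw [Set.disjoint_left]
      intro y hy hy'
      have h1 : y ∈ Z (col c + 1) := himg_sub (hmemC hc) hy
      have h2 : y ∈ Z (col c') := hZmono hlt h1
      exact himg_avoid (hmemC hc') y hy' h2
    intro c hc c' hc' hne
    rcases lt_trichotomy (col c) (col c') with h | h | h
    · exact hlt c c' hc hc' h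
    · rw [Set.disjoint_left]
      rintro y ⟨t, ht, rfl⟩ ⟨t', ht', hy'⟩
      simp only at hy'
      rw [Finset.mem_coe] at ht ht'
      have htT : t ∈ T := by
        have := hTcc (hmemC hc) ▸ ht
        exact (Finset.mem_filter.1 this).1
      have ht'T : t' ∈ T := by
        have := hTcc (hmemC hc') ▸ ht'
        exact (Finset.mem_filter.1 this).1
      have hcc' : c' = (t'⁻¹ * t) • c := by
        rw [mul_smul, ← hy', inv_smul_smul]
      have hg : t'⁻¹ * t ∈ T⁻¹ * T :=
        Finset.mul_mem_mul (Finset.inv_mem_inv ht'T) htT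
      have hg1 : t'⁻¹ * t ≠ 1 := by
        intro h1
        rw [h1, one_smul] at hcc'
        exact hne hcc'.symm
      have := hcol (t'⁻¹ * t) hg hg1 c
      rw [← hcc'] at this
      exact this (h.symm)
    · exact (hlt c' c hc' hc h).symm
  · intro c hc
    rw [Set.disjoint_left]
    intro y hy hyY
    exact himg_avoid (hmemC hc) y hy (hYsub (col c) hyY)
  · rw [hE2]
    exact hE1
  · intro x
    have hrw : Y ∪ (T : Set G) • C = W := hE2
    rw [hrw]
    set n := col x with hn
    by_cases hx : x ∈ Cn n
    · have hS : ∀ t ∈ Tc x, t • x ∈ W := fun t ht =>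
        hZW (n + 1) (himg_sub hx ⟨t, ht, rfl⟩)
      have hsub : Tc x ⊆ T := by
        rw [hTcc hx]; exact Finset.filter_subset _ _
      have h1 := hcount x (Tc x) hsub hS
      have h2 := hTclarge hx
      have h3 : ε * (T.card : ℝ) ≤ (1 - ε) * (T.card : ℝ) := by
        apply mul_le_mul_of_nonneg_right _ (Nat.cast_nonneg _)
        linarith
      linarith
    · have hnIn : ε * (T.card : ℝ) ≤ (nIn T (Z n) x : ℝ) := by
        by_contra hcon
        push_neg at hcon
        exact hx ⟨rfl, hcon⟩
      set S : Finset G := T.filter fun t => t • x ∈ Z n with hSdef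
      have hScard : S.card = nIn T (Z n) x := rfl
      have h1 := hcount x S (Finset.filter_subset _ _) fun t ht =>
        hZW n (Finset.mem_filter.1 ht).2
      rw [hScard] at h1
      linarith
end

section
/- Let G be a group, K ⊆ G finite, δ > 0, and 0 < ε < 1. If a nonempty finite set F ⊆ G is (K, δ)-invariant and a finite set F' ⊆ G satisfies |F' △ F| < ε|F|, then F' is (K, ((|K|+1)ε + δ)/(1−ε))-invariant. -/
open Set
open scoped Pointwise symmDiff

/-- If `F` is `(K,δ)`-invariant and `|F' △ F| < ε|F|`, then `F'` is
`(K, ((|K|+1)ε + δ)/(1-ε))`-invariant. -/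
theorem stmt10 {G : Type*} [Group G] [DecidableEq G]
    (K F F' : Finset G) (δ ε : ℝ) (hδ : 0 < δ) (hε : 0 < ε) (hε1 : ε < 1)
    (hF : IsInv K F δ)
    (hF' : (((F' ∆ F : Finset G)).card : ℝ) < ε * F.card) :
    IsInv K F' (((K.card + 1) * ε + δ) / (1 - ε)) := by
  obtain ⟨hFne, hKF⟩ := hF
  have hcoe : ∀ (A B : Finset G),
      (((A : Set G) * (B : Set G)) ∆ (B : Set G)).ncard = ((A * B) ∆ B).card := by
    intro A B
    rw [← Finset.coe_mul, ← Finset.coe_symmDiff, Set.ncard_coe_finset]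
  rw [hcoe] at hKF
  rw [IsInv, hcoe]
  -- subset lemma
  have hsub : (K * F') ∆ F' ⊆ ((K * F) ∆ F) ∪ (K * (F' ∆ F)) ∪ (F' ∆ F) := by
    intro x hx
    rw [Finset.mem_symmDiff] at hx
    rcases hx with ⟨hx1, hx2⟩ | ⟨hx1, hx2⟩
    · rw [Finset.mem_mul] at hx1
      obtain ⟨k, hk, f, hf, rfl⟩ := hx1
      by_cases hfF : f ∈ F
      · by_cases h : k * f ∈ F
        · exact Finset.mem_union_right _ (Finset.mem_symmDiff.mpr (Or.inr ⟨h, hx2⟩))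
        · exact Finset.mem_union_left _ (Finset.mem_union_left _
            (Finset.mem_symmDiff.mpr (Or.inl ⟨Finset.mul_mem_mul hk hfF, h⟩)))
      · exact Finset.mem_union_left _ (Finset.mem_union_right _
          (Finset.mul_mem_mul hk (Finset.mem_symmDiff.mpr (Or.inl ⟨hf, hfF⟩))))
    · by_cases hxF : x ∈ F
      · by_cases h : x ∈ K * F
        · rw [Finset.mem_mul] at h
          obtain ⟨k, hk, f, hf, rfl⟩ := h
          have hfF' : f ∉ F' := fun hfF' => hx2 (Finset.mul_mem_mul hk hfF')
          exact Finset.mem_union_left _ (Finset.mem_union_right _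
            (Finset.mul_mem_mul hk (Finset.mem_symmDiff.mpr (Or.inr ⟨hf, hfF'⟩))))
        · exact Finset.mem_union_left _ (Finset.mem_union_left _
            (Finset.mem_symmDiff.mpr (Or.inr ⟨hxF, h⟩)))
      · exact Finset.mem_union_right _ (Finset.mem_symmDiff.mpr (Or.inl ⟨hx1, hxF⟩))
  have h1 : ((K * F') ∆ F').card ≤
      ((K * F) ∆ F).card + K.card * (F' ∆ F).card + (F' ∆ F).card := by
    have h2 := Finset.card_le_card hsub
    have h3 := Finset.card_union_le (((K * F) ∆ F) ∪ (K * (F' ∆ F))) (F' ∆ F)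
    have h4 := Finset.card_union_le ((K * F) ∆ F) (K * (F' ∆ F))
    have h5 := Finset.card_mul_le (s := K) (t := F' ∆ F)
    omega
  -- F ⊆ F' ∪ (F' ∆ F)
  have hFsub : F ⊆ F' ∪ (F' ∆ F) := by
    intro x hx
    by_cases h : x ∈ F'
    · exact Finset.mem_union_left _ h
    · exact Finset.mem_union_right _ (Finset.mem_symmDiff.mpr (Or.inr ⟨hx, h⟩))
  have hcardF : (F.card : ℝ) ≤ F'.card + (F' ∆ F).card := by
    have := (Finset.card_le_card hFsub).trans (Finset.card_union_le _ _)
    exact_mod_cast this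
  have hFpos : (0 : ℝ) < F.card := by
    exact_mod_cast Finset.card_pos.mpr hFne
  have hF'big : (1 - ε) * F.card < F'.card := by nlinarith
  have hF'pos : (0 : ℝ) < F'.card := by nlinarith
  refine ⟨Finset.card_pos.mp (by exact_mod_cast hF'pos), ?_⟩
  have h1R : (((K * F') ∆ F').card : ℝ) ≤
      ((K * F) ∆ F).card + K.card * (F' ∆ F).card + (F' ∆ F).card := by
    exact_mod_cast h1
  rw [div_mul_eq_mul_div, lt_div_iff₀ (by linarith : (0 : ℝ) < 1 - ε)]
  have hKnn : (0 : ℝ) ≤ K.card := Nat.cast_nonneg _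
  have hεs : (0 : ℝ) < 1 - ε := by linarith
  have hnum : (((K * F) ∆ F).card : ℝ) + K.card * (F' ∆ F).card + (F' ∆ F).card
      < ((K.card + 1) * ε + δ) * F.card := by
    nlinarith [mul_le_mul_of_nonneg_left hF'.le hKnn]
  have hc : (0 : ℝ) < (K.card + 1) * ε + δ := by positivity
  linarith [mul_le_mul_of_nonneg_right h1R hεs.le, mul_lt_mul_of_pos_right hnum hεs,
    mul_lt_mul_of_pos_left hF'big hc]
end

section
/- Let G be a countably infinite group and X the Cantor set. Then FrMin(G,X), the set of free minimal actions, is a G_δ subset of the space Act(G,X) of actions of G on X by homeomorphisms. -/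
open Set

/-- `Z` is a Cantor set: a nonempty compact metrizable zero-dimensional space without
isolated points. -/
def IsCantorSet (Z : Type*) [TopologicalSpace Z] : Prop :=
  Nonempty Z ∧ CompactSpace Z ∧ TopologicalSpace.MetrizableSpace Z ∧
    TotallyDisconnectedSpace Z ∧ ∀ z : Z, ¬ IsOpen ({z} : Set Z)

/-- An action of `G` on `X` by homeomorphisms. (Each `toFun g` is automatically a
homeomorphism, with continuous inverse `toFun g⁻¹`.) -/
structure ActG (G X : Type*) [Group G] [TopologicalSpace X] where
  toFun : G → X → X
  continuous_toFun : ∀ g : G, Continuous (toFun g)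
  toFun_one : ∀ x : X, toFun 1 x = x
  toFun_mul : ∀ (g h : G) (x : X), toFun (g * h) x = toFun g (toFun h x)

variable {G X : Type*} [Group G] [TopologicalSpace X]

/-- `P` is a clopen partition of `X`. -/
def IsClopenPartition (P : Finset (Set X)) : Prop :=
  (∀ A ∈ P, IsClopen A) ∧ (∀ A ∈ P, ∀ B ∈ P, A ≠ B → Disjoint A B) ∧
    ⋃₀ (P : Set (Set X)) = Set.univ

/-- The topology on `Act(G,X)` generated by the basic sets
`U_{α,P,F} = {β : β_s A = α_s A for all A ∈ P, s ∈ F}`, where `P` ranges over clopen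
partitions of `X` and `F` over finite subsets of `G`. -/
def actTopology (G X : Type*) [Group G] [TopologicalSpace X] :
    TopologicalSpace (ActG G X) :=
  TopologicalSpace.generateFrom
    {U | ∃ (α : ActG G X) (P : Finset (Set X)) (F : Finset G), IsClopenPartition P ∧
      U = {β : ActG G X | ∀ A ∈ P, ∀ s ∈ F, β.toFun s '' A = α.toFun s '' A}}

/-- The action `α` is free. -/
def ActG.IsFree (α : ActG G X) : Prop :=
  ∀ g : G, g ≠ 1 → ∀ x : X, α.toFun g x ≠ x

/-- The action `α` is minimal: every orbit is dense. -/
def ActG.IsMinimal (α : ActG G X) : Prop :=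
  ∀ x : X, Dense (Set.range fun g : G => α.toFun g x)

/-! ### Auxiliary lemmas -/

lemma ActG.inv_apply (α : ActG G X) (g : G) (x : X) :
    α.toFun g⁻¹ (α.toFun g x) = x := by
  rw [← α.toFun_mul, inv_mul_cancel, α.toFun_one]

lemma ActG.apply_inv (α : ActG G X) (g : G) (x : X) :
    α.toFun g (α.toFun g⁻¹ x) = x := by
  rw [← α.toFun_mul, mul_inv_cancel, α.toFun_one]

lemma ActG.image_eq_preimage (α : ActG G X) (g : G) (A : Set X) :
    α.toFun g '' A = α.toFun g⁻¹ ⁻¹' A := by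
  ext x
  constructor
  · rintro ⟨a, ha, rfl⟩
    simpa [Set.mem_preimage, α.inv_apply] using ha
  · intro hx
    exact ⟨α.toFun g⁻¹ x, hx, α.apply_inv g x⟩

lemma ActG.isOpen_image (α : ActG G X) (g : G) {A : Set X} (hA : IsOpen A) :
    IsOpen (α.toFun g '' A) := by
  rw [α.image_eq_preimage]
  exact hA.preimage (α.continuous_toFun g⁻¹)

/-- In a compact second-countable space there are only countably many clopen sets. -/
lemma countable_clopens (Y : Type*) [TopologicalSpace Y] [CompactSpace Y]
    [SecondCountableTopology Y] :
    {U : Set Y | IsClopen U}.Countable := by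
  set B := TopologicalSpace.countableBasis Y with hB
  have hBc : B.Countable := TopologicalSpace.countable_countableBasis Y
  have hbasis := TopologicalSpace.isBasis_countableBasis Y
  have key : {U : Set Y | IsClopen U} ⊆ Set.sUnion '' {S | S.Finite ∧ S ⊆ B} := by
    intro U hU
    have hcomp : IsCompact U := hU.isClosed.isCompact
    have hcover : U ⊆ ⋃ b : {b // b ∈ B ∧ b ⊆ U}, (b : Set Y) := by
      intro x hx
      obtain ⟨b, hb, hxb, hbU⟩ := hbasis.exists_subset_of_mem_open hx hU.isOpen
      exact Set.mem_iUnion.2 ⟨⟨b, hb, hbU⟩, hxb⟩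
    obtain ⟨t, ht⟩ := hcomp.elim_finite_subcover _
      (fun b : {b // b ∈ B ∧ b ⊆ U} => (TopologicalSpace.isOpen_of_mem_countableBasis b.2.1))
      hcover
    refine ⟨Subtype.val '' (t : Set {b // b ∈ B ∧ b ⊆ U}), ⟨(t.finite_toSet).image _,
      by rintro b ⟨c, _, rfl⟩; exact c.2.1⟩, ?_⟩
    apply subset_antisymm
    · rintro x ⟨b, ⟨c, hc, rfl⟩, hxb⟩
      exact c.2.2 hxb
    · intro x hx
      obtain ⟨b, hb, hxb⟩ := Set.mem_iUnion₂.1 (ht hx)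
      exact ⟨b, ⟨b, hb, rfl⟩, hxb⟩
  exact ((Set.countable_setOf_finite_subset hBc).image _).mono key

/-- From a finite clopen cover one gets a clopen partition refining it. -/
lemma exists_clopen_partition_of_cover (f : ℕ → Set X) (N : ℕ) (hcl : ∀ n, IsClopen (f n))
    (hcov : (⋃ n ∈ Finset.range N, f n) = Set.univ) :
    ∃ P : Finset (Set X), IsClopenPartition P ∧ ∀ A ∈ P, ∃ n, A ⊆ f n := by
  classical
  set A : ℕ → Set X := fun n => f n \ ⋃ i : Fin n, f (i : ℕ) with hA
  have hAcl : ∀ n, IsClopen (A n) :=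
    fun n => (hcl n).diff (isClopen_iUnion_of_finite fun i => hcl _)
  have hAsub : ∀ n, A n ⊆ f n := fun n => diff_subset
  have hAdis : ∀ i j, i < j → Disjoint (A i) (A j) := by
    intro i j hij
    refine Set.disjoint_left.2 fun x hxi hxj => ?_
    exact hxj.2 (Set.mem_iUnion.2 ⟨⟨i, hij⟩, hAsub i hxi⟩)
  refine ⟨(Finset.range N).image A, ⟨?_, ?_, ?_⟩, ?_⟩
  · intro B hB
    obtain ⟨n, _, rfl⟩ := Finset.mem_image.1 hB
    exact hAcl n
  · intro B hB C hC hne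
    obtain ⟨n, _, rfl⟩ := Finset.mem_image.1 hB
    obtain ⟨m, _, rfl⟩ := Finset.mem_image.1 hC
    rcases lt_trichotomy n m with h | h | h
    · exact hAdis n m h
    · exact absurd (by rw [h]) hne
    · exact (hAdis m n h).symm
  · apply subset_antisymm (subset_univ _)
    intro x _
    have hex : ∃ n, x ∈ f n := by
      obtain ⟨n, _, hn⟩ :=
        Set.mem_iUnion₂.1 (hcov ▸ Set.mem_univ x : x ∈ ⋃ n ∈ Finset.range N, f n)
      exact ⟨n, hn⟩
    set n₀ := Nat.find hex with hn₀
    have hxA : x ∈ A n₀ := by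
      refine ⟨Nat.find_spec hex, fun hx => ?_⟩
      obtain ⟨i, hi⟩ := Set.mem_iUnion.1 hx
      exact Nat.find_min hex i.2 hi
    have hn₀N : n₀ < N := by
      obtain ⟨m, hmN, hm⟩ :=
        Set.mem_iUnion₂.1 (hcov ▸ Set.mem_univ x : x ∈ ⋃ n ∈ Finset.range N, f n)
      exact lt_of_le_of_lt (Nat.find_min' hex hm) (Finset.mem_range.1 hmN)
    exact Set.mem_sUnion.2 ⟨A n₀, by
      simpa using Finset.mem_image.2 ⟨n₀, Finset.mem_range.2 hn₀N, rfl⟩, hxA⟩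
  · intro B hB
    obtain ⟨n, _, rfl⟩ := Finset.mem_image.1 hB
    exact ⟨n, hAsub n⟩

lemma exists_clopen_nbhd_disjoint_image [TotallySeparatedSpace X] {T : X → X}
    (hT : Continuous T) {x : X} (hx : T x ≠ x) :
    ∃ D : Set X, IsClopen D ∧ x ∈ D ∧ Disjoint (T '' D) D := by
  obtain ⟨C, hC, hxC, hTC⟩ := exists_isClopen_of_totally_separated (Ne.symm hx)
  refine ⟨C ∩ T ⁻¹' Cᶜ, hC.inter (hC.compl.preimage hT), ⟨hxC, hTC⟩, ?_⟩
  refine Set.disjoint_left.2 ?_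
  rintro y ⟨z, hz, rfl⟩ hy
  exact hz.2 hy.1

lemma exists_partition_disjoint [CompactSpace X] [TotallySeparatedSpace X] {T : X → X}
    (hT : Continuous T) (h : ∀ x, T x ≠ x) :
    ∃ P : Finset (Set X), IsClopenPartition P ∧ ∀ A ∈ P, Disjoint (T '' A) A := by
  classical
  choose D hDcl hDmem hDdis using fun x => exists_clopen_nbhd_disjoint_image hT (h x)
  obtain ⟨t, ht⟩ := isCompact_univ.elim_finite_subcover D (fun x => (hDcl x).isOpen)
    (fun x _ => Set.mem_iUnion.2 ⟨x, hDmem x⟩)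
  set l := t.toList with hl
  set f : ℕ → Set X := fun n => if hn : n < l.length then D (l.get ⟨n, hn⟩) else ∅ with hf
  have hfcl : ∀ n, IsClopen (f n) := by
    intro n
    by_cases hn : n < l.length
    · simp only [hf, dif_pos hn]; exact hDcl _
    · simp only [hf, dif_neg hn]; exact isClopen_empty
  have hfdisj : ∀ n, Disjoint (T '' f n) (f n) := by
    intro n
    by_cases hn : n < l.length
    · simp only [hf, dif_pos hn]; exact hDdis _
    · simp only [hf, dif_neg hn, Set.image_empty]; exact disjoint_bot_left
  have hcov : (⋃ n ∈ Finset.range l.length, f n) = Set.univ := by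
    apply subset_antisymm (subset_univ _)
    intro x _
    obtain ⟨y, hyt, hy⟩ := Set.mem_iUnion₂.1 (ht (Set.mem_univ x))
    have hyl : y ∈ l := by rw [hl]; exact Finset.mem_toList.2 hyt
    obtain ⟨⟨n, hn⟩, rfl⟩ := List.mem_iff_get.1 hyl
    refine Set.mem_iUnion₂.2 ⟨n, Finset.mem_range.2 hn, ?_⟩
    simp only [hf, dif_pos hn]
    exact hy
  obtain ⟨P, hP, hPsub⟩ := exists_clopen_partition_of_cover f l.length hfcl hcov
  refine ⟨P, hP, fun A hA => ?_⟩
  obtain ⟨n, hn⟩ := hPsub A hA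
  exact (hfdisj n).mono (Set.image_mono hn) hn

/-- For a countably infinite group `G` and the Cantor set `X`, the set `FrMin(G,X)` of free
minimal actions is a `G_δ` subset of `Act(G,X)`. -/
theorem stmt14 (G X : Type*) [Group G] [Countable G] [Infinite G]
    [TopologicalSpace X] (hX : IsCantorSet X) :
    @IsGδ (ActG G X) (actTopology G X) {α : ActG G X | α.IsFree ∧ α.IsMinimal} := by
  classical
  obtain ⟨hne, hcomp, hmetr, htd, -⟩ := hX
  haveI := hne; haveI := hcomp; haveI := hmetr; haveI := htd
  letI : MetricSpace X := TopologicalSpace.metrizableSpaceMetric X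
  letI : TopologicalSpace (ActG G X) := actTopology G X
  -- basic open sets
  have hbasic : ∀ (α : ActG G X) (P : Finset (Set X)) (F : Finset G), IsClopenPartition P →
      IsOpen {β : ActG G X | ∀ A ∈ P, ∀ s ∈ F, β.toFun s '' A = α.toFun s '' A} := by
    intro α P F hP
    exact TopologicalSpace.isOpen_generateFrom_of_mem ⟨α, P, F, hP, rfl⟩
  -- the free part
  have hOopen : ∀ g : G, IsOpen {β : ActG G X | ∀ x, β.toFun g x ≠ x} := by
    intro g
    rw [isOpen_iff_forall_mem_open]
    intro α hα
    obtain ⟨P, hP, hPdis⟩ := exists_partition_disjoint (α.continuous_toFun g) hα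
    refine ⟨{β : ActG G X | ∀ A ∈ P, ∀ s ∈ ({g} : Finset G),
        β.toFun s '' A = α.toFun s '' A}, ?_, hbasic α P {g} hP, ?_⟩
    · intro β hβ x
      obtain ⟨A, hAP, hxA⟩ := Set.mem_sUnion.1 (hP.2.2 ▸ Set.mem_univ x)
      have hmem : β.toFun g x ∈ α.toFun g '' A :=
        hβ A hAP g (Finset.mem_singleton_self g) ▸ ⟨x, hxA, rfl⟩
      intro hEq
      exact Set.disjoint_left.1 (hPdis A hAP) hmem (by rwa [hEq])
    · intro A _ s _; rfl
  have hFree : IsGδ {α : ActG G X | α.IsFree} := by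
    have heq : {α : ActG G X | α.IsFree}
        = ⋂ g : {g : G // g ≠ 1}, {β : ActG G X | ∀ x, β.toFun g.1 x ≠ x} := by
      ext α
      simp only [Set.mem_setOf_eq, Set.mem_iInter, ActG.IsFree, Subtype.forall]
    rw [heq]
    exact IsGδ.iInter fun g => (hOopen g.1).isGδ
  -- the minimal part
  set S : Set (Set X) := {U | IsClopen U ∧ U.Nonempty} with hS
  have hScnt : S.Countable := (countable_clopens X).mono fun U hU => hU.1
  set M : Set X → Set (ActG G X) :=
    fun U => {β | ∃ F : Finset G, (⋃ g ∈ F, β.toFun g '' U) = Set.univ} with hM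
  have hMopen : ∀ U : Set X, IsClopen U → U.Nonempty → IsOpen (M U) := by
    intro U hUcl hUne
    rw [isOpen_iff_forall_mem_open]
    intro α hα
    obtain ⟨F, hF⟩ := hα
    have hUP : U ∈ (insert U ({Uᶜ} : Finset (Set X))) := Finset.mem_insert_self _ _
    have hP : IsClopenPartition (insert U ({Uᶜ} : Finset (Set X))) := by
      refine ⟨?_, ?_, ?_⟩
      · intro A hA
        rcases Finset.mem_insert.1 hA with rfl | hA
        · exact hUcl
        · rw [Finset.mem_singleton.1 hA]; exact hUcl.compl
      · intro A hA B hB hne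
        rcases Finset.mem_insert.1 hA with rfl | hA
        · rcases Finset.mem_insert.1 hB with rfl | hB
          · exact absurd rfl hne
          · obtain rfl := Finset.mem_singleton.1 hB
            exact disjoint_compl_right
        · obtain rfl := Finset.mem_singleton.1 hA
          rcases Finset.mem_insert.1 hB with rfl | hB
          · exact disjoint_compl_left
          · obtain rfl := Finset.mem_singleton.1 hB
            exact absurd rfl hne
      · rw [Finset.coe_insert, Finset.coe_singleton, Set.sUnion_insert,
          Set.sUnion_singleton, Set.union_compl_self]
    refine ⟨{β : ActG G X | ∀ A ∈ (insert U ({Uᶜ} : Finset (Set X))), ∀ s ∈ F,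
        β.toFun s '' A = α.toFun s '' A}, ?_, hbasic α _ F hP, ?_⟩
    · intro β hβ
      refine ⟨F, ?_⟩
      rw [← hF]
      exact Set.iUnion₂_congr fun g hg => hβ U hUP g hg
    · intro A _ s _; rfl
  have hMinEq : {α : ActG G X | α.IsMinimal} = ⋂ U ∈ S, M U := by
    ext α
    constructor
    · intro hmin
      refine Set.mem_iInter₂.2 fun U hU => ?_
      obtain ⟨hUcl, hUne⟩ := hU
      have hcover : (Set.univ : Set X) ⊆ ⋃ g : G, α.toFun g '' U := by
        intro x _
        obtain ⟨y, hy, hyU⟩ := (hmin x).exists_mem_open hUcl.isOpen hUne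
        obtain ⟨g, rfl⟩ := hy
        exact Set.mem_iUnion.2 ⟨g⁻¹, α.toFun g x, hyU, α.inv_apply g x⟩
      obtain ⟨F, hF⟩ := isCompact_univ.elim_finite_subcover _
        (fun g => α.isOpen_image g hUcl.isOpen) hcover
      exact ⟨F, subset_antisymm (Set.subset_univ _) hF⟩
    · intro hα x
      rw [dense_iff_inter_open]
      intro V hV hVne
      obtain ⟨v, hv⟩ := hVne
      obtain ⟨U, hUcl, hvU, hUV⟩ :=
        loc_compact_Haus_tot_disc_of_zero_dim.exists_subset_of_mem_open hv hV
      have hUS : U ∈ S := ⟨hUcl, ⟨v, hvU⟩⟩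
      obtain ⟨F, hF⟩ := Set.mem_iInter₂.1 hα U hUS
      have hx : x ∈ ⋃ g ∈ F, α.toFun g '' U := hF ▸ Set.mem_univ x
      obtain ⟨g, hg, u, huU, hux⟩ := Set.mem_iUnion₂.1 hx
      have heq : α.toFun g⁻¹ x = u := by rw [← hux, α.inv_apply]
      exact ⟨α.toFun g⁻¹ x, heq ▸ hUV huU, ⟨g⁻¹, rfl⟩⟩
  have hMin : IsGδ {α : ActG G X | α.IsMinimal} := by
    rw [hMinEq]
    exact IsGδ.biInter hScnt fun U hU => (hMopen U hU.1 hU.2).isGδ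
  exact hFree.inter hMin
end

section
/- Let G be a group, let F ⊆ G be a finite symmetric set containing the identity e, let Q be a positive integer, and let T' ⊆ G be a finite set. Define B_Q = ⋂_{s ∈ F^Q} sT', B_0 = T' ∖ F^{Q−1}B_Q, and B_q = F^{Q−q}B_Q ∖ F^{Q−q−1}B_Q for q = 1, …, Q−1 (with the convention F^0 = {e}). Then for every s ∈ F one has sB_Q ⊆ B_{Q−1} ∪ B_Q, and sB_q ⊆ B_{q−1} ∪ B_q ∪ B_{q+1} for every q = 1, …, Q−1. -/
open Set
open scoped Pointwise

/-- **Band structure of the sets `B_q`.** Let `F ⊆ G` be a finite symmetric set containing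
the identity, `Q` a positive integer, and `T' ⊆ G` finite. With
`B_Q = ⋂_{s ∈ F^Q} sT'`, `B_0 = T' ∖ F^{Q-1}B_Q`, and
`B_q = F^{Q-q}B_Q ∖ F^{Q-q-1}B_Q` for `q = 1, …, Q-1`, every `s ∈ F` satisfies
`sB_Q ⊆ B_{Q-1} ∪ B_Q` and `sB_q ⊆ B_{q-1} ∪ B_q ∪ B_{q+1}` for `q = 1, …, Q-1`. -/
theorem stmt16 {G : Type*} [Group G]
    (F : Finset G) (hsym : ∀ g ∈ F, g⁻¹ ∈ F) (he : (1 : G) ∈ F)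
    (Q : ℕ) (hQ : 0 < Q) (T' : Finset G)
    (B : ℕ → Set G)
    (hBQ : B Q = ⋂ s ∈ ((F : Set G) ^ Q), s • (T' : Set G))
    (hB0 : B 0 = (T' : Set G) \ ((F : Set G) ^ (Q - 1) * B Q))
    (hBq : ∀ q : ℕ, 1 ≤ q → q ≤ Q - 1 →
      B q = ((F : Set G) ^ (Q - q) * B Q) \ ((F : Set G) ^ (Q - q - 1) * B Q)) :
    ∀ s ∈ F, s • B Q ⊆ B (Q - 1) ∪ B Q ∧
      ∀ q : ℕ, 1 ≤ q → q ≤ Q - 1 → s • B q ⊆ B (q - 1) ∪ B q ∪ B (q + 1) := by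
  -- F is symmetric as a set
  have hFinv : ((F : Set G))⁻¹ = (F : Set G) := by
    ext g
    simp only [Set.mem_inv, Finset.mem_coe]
    constructor
    · intro h; simpa using hsym _ h
    · intro h; exact hsym _ h
  have hpowinv : ∀ k : ℕ, ∀ f ∈ (F : Set G) ^ k, f⁻¹ ∈ (F : Set G) ^ k := by
    intro k f hf
    have : f⁻¹ ∈ ((F : Set G) ^ k)⁻¹ := by simpa using hf
    rwa [← inv_pow, hFinv] at this
  -- multiplication by f ∈ F^Q keeps B Q inside T'
  have hT : ∀ f ∈ (F : Set G) ^ Q, ∀ b ∈ B Q, f * b ∈ (T' : Set G) := by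
    intro f hf b hb
    rw [hBQ] at hb
    have hb' : b ∈ f⁻¹ • (T' : Set G) :=
      Set.mem_iInter₂.mp hb f⁻¹ (hpowinv Q f hf)
    rw [Set.mem_smul_set_iff_inv_smul_mem, inv_inv] at hb'
    simpa [smul_eq_mul] using hb'
  -- products of the form s • (f * b)
  have hstep : ∀ s ∈ F, ∀ k : ℕ, ∀ x ∈ (F : Set G) ^ k * B Q,
      s • x ∈ (F : Set G) ^ (k + 1) * B Q := by
    intro s hs k x hx
    obtain ⟨f, hf, b, hb, rfl⟩ := hx
    have : s * f ∈ (F : Set G) ^ (k + 1) := by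
      rw [pow_succ']
      exact Set.mul_mem_mul hs hf
    have := Set.mul_mem_mul this hb
    simpa [smul_eq_mul, mul_assoc] using this
  have hmove : ∀ s ∈ F, ∀ k : ℕ, ∀ x : G, s • x ∈ (F : Set G) ^ k * B Q →
      x ∈ (F : Set G) ^ (k + 1) * B Q := by
    intro s hs k x hx
    have := hstep s⁻¹ (hsym s hs) k (s • x) hx
    simpa [smul_smul] using this
  -- F^0 * B Q = B Q
  have hzero : (F : Set G) ^ 0 * B Q = B Q := by
    rw [pow_zero, one_mul]
  have hQmem : ∀ s ∈ F, ∀ b ∈ B Q, s * b ∈ (F : Set G) * B Q := by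
    intro s hs b hb
    exact Set.mul_mem_mul hs hb
  intro s hs
  constructor
  · -- s • B Q ⊆ B (Q-1) ∪ B Q
    rintro x ⟨b, hb, rfl⟩
    by_cases h : s • b ∈ B Q
    · exact Or.inr h
    · left
      by_cases hQ1 : Q = 1
      · subst hQ1
        rw [hB0]
        refine ⟨?_, ?_⟩
        · have : s ∈ (F : Set G) ^ 1 := by simpa using hs
          simpa [smul_eq_mul] using hT s this b hb
        · simpa [hzero] using h
      · have h1 : 1 ≤ Q - 1 := by omega
        rw [hBq (Q - 1) h1 le_rfl]
        have e1 : Q - (Q - 1) = 1 := by omega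
        have e2 : Q - (Q - 1) - 1 = 0 := by omega
        rw [e1, show (1:ℕ) - 1 = 0 from rfl, hzero, pow_one]
        refine ⟨?_, h⟩
        simpa [smul_eq_mul] using hQmem s hs b hb
  · intro q hq1 hq2
    rintro x ⟨y, hy, rfl⟩
    rw [hBq q hq1 hq2] at hy
    obtain ⟨hy1, hy2⟩ := hy
    by_cases h1 : s • y ∈ (F : Set G) ^ (Q - q - 1) * B Q
    · -- lands in B (q+1)
      right
      by_cases hqQ : q = Q - 1
      · have e0 : Q - q - 1 = 0 := by omega
        have eq1 : q + 1 = Q := by omega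
        rw [e0, hzero] at h1
        rwa [eq1]
      · have hq2' : q + 1 ≤ Q - 1 := by omega
        rw [hBq (q + 1) (by omega) hq2']
        refine ⟨by rwa [show Q - (q + 1) = Q - q - 1 by omega], ?_⟩
        intro hcon
        have := hmove s hs (Q - (q + 1) - 1) y hcon
        rw [show Q - (q + 1) - 1 + 1 = Q - q - 1 by omega] at this
        exact hy2 this
    · by_cases h2 : s • y ∈ (F : Set G) ^ (Q - q) * B Q
      · -- lands in B q
        left; right
        rw [hBq q hq1 hq2]
        exact ⟨h2, h1⟩
      · -- lands in B (q-1)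
        left; left
        have ha1 : s • y ∈ (F : Set G) ^ (Q - q + 1) * B Q := by
          obtain ⟨f, hf, b, hb, rfl⟩ := hy1
          have hsf : s * f ∈ (F : Set G) ^ (Q - q + 1) := by
            rw [pow_succ']
            exact Set.mul_mem_mul hs hf
          have := Set.mul_mem_mul hsf hb
          simpa [smul_eq_mul, mul_assoc] using this
        by_cases hq1' : q = 1
        · subst hq1'
          rw [hB0]
          constructor
          · obtain ⟨f, hf, b, hb, rfl⟩ := hy1
            have hsf : s * f ∈ (F : Set G) ^ Q := by
              have hpe : (F : Set G) ^ Q = (F : Set G) * (F : Set G) ^ (Q - 1) := by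
                rw [← pow_succ']; congr 1; omega
              rw [hpe]
              exact Set.mul_mem_mul hs hf
            have := hT (s * f) hsf b hb
            simpa [smul_eq_mul, mul_assoc] using this
          · rwa [show Q - 1 = Q - 1 by rfl] at h2
        · rw [hBq (q - 1) (by omega) (by omega)]
          constructor
          · rwa [show Q - (q - 1) = Q - q + 1 by omega]
          · rwa [show Q - (q - 1) - 1 = Q - q by omega]
end
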